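/- arXiv:2507.14244 — 15 statements merged into one kernel-verified Lean document; each statement's English description precedes it below -/
import Mathlib

section
/- Let α be a positive real number that is not an integer. Then for every positive integer n, ⌊α⟨αn⟩⌋ ≤ f_α(n) ≤ ⌈α⟨αn⟩⌉, where ⟨x⟩ = x − ⌊x⌋ is the fractional part. -/
/-- `f α n = ⌊α² n⌋ - ⌊α ⌊α n⌋⌋` for a real parameter `α` and positive integer `n`. -/
noncomputable def f (α : ℝ) (n : ℕ) : ℤ :=
  ⌊α ^ 2 * (n : ℝ)⌋ - ⌊α * ((⌊α * (n : ℝ)⌋ : ℤ) : ℝ)⌋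

/-- `Range (f_α) = {f_α(n) : n ∈ ℕ, n ≥ 1}`. -/
def Range (α : ℝ) : Set ℤ := {v : ℤ | ∃ n : ℕ, 1 ≤ n ∧ f α n = v}

theorem stmt1 (α : ℝ) (hα : 0 < α) (hni : ¬ ∃ m : ℤ, α = (m : ℝ))
    (n : ℕ) (hn : 1 ≤ n) :
    ⌊α * Int.fract (α * (n : ℝ))⌋ ≤ f α n ∧ f α n ≤ ⌈α * Int.fract (α * (n : ℝ))⌉ := by
  unfold f
  set x : ℝ := α * ((⌊α * (n : ℝ)⌋ : ℤ) : ℝ) with hx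
  set y : ℝ := α * Int.fract (α * (n : ℝ)) with hy
  have key : α ^ 2 * (n : ℝ) = x + y := by
    rw [hx, hy, Int.fract]; ring
  rw [key]
  constructor
  · have h1 : (⌊x⌋ + ⌊y⌋ : ℤ) ≤ ⌊x + y⌋ := by
      apply Int.le_floor.2
      push_cast
      exact add_le_add (Int.floor_le x) (Int.floor_le y)
    omega
  · have h2 : ⌊x + y⌋ ≤ ⌊x⌋ + ⌈y⌉ := by
      have : x + y < ((⌊x⌋ + ⌈y⌉ : ℤ) : ℝ) + 1 := by
        push_cast
        have := Int.lt_floor_add_one x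
        have := Int.le_ceil y
        linarith
      exact Int.lt_add_one_iff.1 (Int.floor_lt.2 (by push_cast at this ⊢; linarith))
    omega
end

section
/- Let a ∈ ℕ and b ∈ ℕ with b ≥ 2 be relatively prime, and set α = a/b. Then Range(f_α) = {0} ∪ {f_α(r) : r ∈ ℤ, 1 ≤ r ≤ b² − 1}. -/
lemma f_period (a b : ℕ) (hb : 0 < b) (r k : ℕ) :
    f ((a : ℝ) / (b : ℝ)) (r + k * b ^ 2) = f ((a : ℝ) / (b : ℝ)) r := by
  set α : ℝ := (a : ℝ) / (b : ℝ) with hα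
  have hb' : (b : ℝ) ≠ 0 := by positivity
  have h1 : α ^ 2 * ((r + k * b ^ 2 : ℕ) : ℝ) =
      α ^ 2 * (r : ℝ) + ((k * a ^ 2 : ℤ) : ℝ) := by
    push_cast [hα]; field_simp
  have h2 : α * ((r + k * b ^ 2 : ℕ) : ℝ) =
      α * (r : ℝ) + ((k * a * b : ℤ) : ℝ) := by
    push_cast [hα]; field_simp
  have h3 : ∀ m : ℤ, α * ((m + (k * a * b : ℤ) : ℤ) : ℝ) =
      α * (m : ℝ) + ((k * a ^ 2 : ℤ) : ℝ) := by
    intro m; push_cast [hα]; field_simp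
  simp only [f, h1, h2, Int.floor_add_intCast, h3]
  ring

lemma f_zero (α : ℝ) : f α 0 = 0 := by
  simp [f]

theorem stmt3 (a b : ℕ) (ha : 0 < a) (hb : 2 ≤ b) (hab : Nat.Coprime a b) :
    Range ((a : ℝ) / (b : ℝ)) =
      {0} ∪ {v : ℤ | ∃ r : ℕ, 1 ≤ r ∧ r ≤ b ^ 2 - 1 ∧ f ((a : ℝ) / (b : ℝ)) r = v} := by
  have hb0 : 0 < b := by omega
  have hb2 : 0 < b ^ 2 := by positivity
  ext v
  constructor
  · rintro ⟨n, hn, rfl⟩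
    have hdecomp : n = n % b ^ 2 + (n / b ^ 2) * b ^ 2 := by
      rw [Nat.mul_comm]; exact (Nat.mod_add_div n (b ^ 2)).symm
    rw [hdecomp, f_period a b hb0]
    rcases Nat.eq_zero_or_pos (n % b ^ 2) with h0 | hpos
    · left; rw [h0, f_zero]; rfl
    · right
      exact ⟨n % b ^ 2, hpos, by have := Nat.mod_lt n hb2; omega, rfl⟩
  · rintro (h | ⟨r, hr1, hr2, rfl⟩)
    · refine ⟨b ^ 2, by omega, ?_⟩
      have : f ((a : ℝ) / (b : ℝ)) (0 + 1 * b ^ 2) = f ((a : ℝ) / (b : ℝ)) 0 :=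
        f_period a b hb0 0 1
      simp only [Nat.zero_add, Nat.one_mul] at this
      rw [this, f_zero]
      exact h.symm
    · exact ⟨r, hr1, rfl⟩
end

section
/- Let α ∈ ℚ with 0 < α ≤ 1. The following dichotomy holds: (i) if α = 1/b with b ∈ ℕ, then Range(f_α) = {0}; (ii) if α = a/b with a, b ∈ ℕ relatively prime and 1 < a < b, then Range(f_α) = {0, 1}. -/
lemma floor_cast_div (n : ℤ) (d : ℕ) : ⌊((n:ℝ)/(d:ℝ))⌋ = n / d := by
  rw [← Rat.floor_intCast_div_natCast n d, ← Rat.floor_cast (α := ℝ), Rat.cast_div,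
    Rat.cast_intCast, Rat.cast_natCast]

lemma nat_key (a b n : ℕ) :
    a^2*n = b^2*(a*(a*n/b)/b) + (b*(a*(a*n/b) % b) + a*(a*n % b)) := by
  set q := a*n/b with hq
  have h1 : b * q + a*n % b = a * n := Nat.div_add_mod (a*n) b
  have h2 : b * (a*q/b) + a*q % b = a * q := Nat.div_add_mod (a*q) b
  calc a^2*n = a*(b*q + a*n % b) := by rw [h1]; ring
  _ = b*(a*q) + a*(a*n % b) := by ring
  _ = b*(b * (a*q/b) + a*q % b) + a*(a*n % b) := by rw [h2]
  _ = _ := by ring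

lemma f_eq (a b : ℕ) (hb : 0 < b) (n : ℕ) :
    f ((a:ℝ)/(b:ℝ)) n = (((b*(a*(a*n/b) % b) + a*(a*n % b)) / b^2 : ℕ) : ℤ) := by
  have hb' : (b:ℝ) ≠ 0 := Nat.cast_ne_zero.2 hb.ne'
  have e1 : ⌊(a:ℝ)/b * n⌋ = ((a*n/b : ℕ) : ℤ) := by
    have h : (a:ℝ)/b * n = (((a*n : ℕ) : ℤ) : ℝ)/((b:ℕ):ℝ) := by push_cast; ring
    rw [h, floor_cast_div]
    exact (Int.natCast_ediv _ _).symm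
  have e2 : ⌊(a:ℝ)/b * (((a*n/b : ℕ) : ℤ) : ℝ)⌋ = ((a*(a*n/b)/b : ℕ) : ℤ) := by
    have h : (a:ℝ)/b * (((a*n/b : ℕ) : ℤ) : ℝ) = (((a*(a*n/b) : ℕ) : ℤ) : ℝ)/((b:ℕ):ℝ) := by
      push_cast; ring
    rw [h, floor_cast_div]
    exact (Int.natCast_ediv _ _).symm
  have e3 : ⌊((a:ℝ)/b)^2 * n⌋ = ((a^2*n/b^2 : ℕ) : ℤ) := by
    have h : ((a:ℝ)/b)^2 * n = (((a^2*n : ℕ) : ℤ) : ℝ)/((b^2:ℕ):ℝ) := by push_cast; ring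
    rw [h, floor_cast_div]
    exact (Int.natCast_ediv _ _).symm
  rw [f, e3, e1, e2]
  have hdiv : a^2*n/b^2 = a*(a*n/b)/b + (b*(a*(a*n/b) % b) + a*(a*n % b)) / b^2 := by
    rw [nat_key a b n, Nat.mul_add_div (by positivity)]
  omega

theorem stmt6 :
    (∀ b : ℕ, 1 ≤ b → Range (1 / (b : ℝ)) = {0}) ∧
    (∀ a b : ℕ, Nat.Coprime a b → 1 < a → a < b →
      Range ((a : ℝ) / (b : ℝ)) = {0, 1}) := by
  constructor
  · intro b hb
    have hb0 : 0 < b := hb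
    have hf : ∀ n : ℕ, f (1 / (b:ℝ)) n = 0 := by
      intro n
      have h1 : (1 : ℝ)/(b:ℝ) = ((1:ℕ):ℝ)/(b:ℝ) := by norm_num
      rw [h1, f_eq 1 b hb0 n]
      have ht : (1*(1*n/b)) % b < b := Nat.mod_lt _ hb0
      have hr : (1*n) % b < b := Nat.mod_lt _ hb0
      have : (b*((1*(1*n/b)) % b) + 1*((1*n) % b)) / b^2 = 0 := by
        apply Nat.div_eq_of_lt
        have : b*((1*(1*n/b)) % b) + 1*((1*n) % b) ≤ b*(b-1) + (b-1) := by
          have := Nat.le_sub_one_of_lt ht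
          have := Nat.le_sub_one_of_lt hr
          nlinarith
        have h2 : b*(b-1) + (b-1) < b^2 := by
          have : 1 ≤ b := hb
          nlinarith [Nat.sub_add_cancel this]
        omega
      rw [this]; norm_num
    ext v
    simp only [Range, Set.mem_setOf_eq, Set.mem_singleton_iff]
    constructor
    · rintro ⟨n, hn, rfl⟩; exact hf n
    · rintro rfl; exact ⟨1, le_refl _, hf 1⟩
  · intro a b hab ha hb
    have hb0 : 0 < b := by omega
    have hb2 : 1 < b^2 := by nlinarith
    -- general bound
    have hrange : ∀ n : ℕ, f ((a:ℝ)/(b:ℝ)) n = 0 ∨ f ((a:ℝ)/(b:ℝ)) n = 1 := by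
      intro n
      rw [f_eq a b hb0 n]
      have ht : (a*(a*n/b)) % b < b := Nat.mod_lt _ hb0
      have hr : (a*n) % b < b := Nat.mod_lt _ hb0
      have hd : b*((a*(a*n/b)) % b) + a*((a*n) % b) < 2*b^2 := by nlinarith
      have h2 : (b*((a*(a*n/b)) % b) + a*((a*n) % b)) / b^2 < 2 :=
        Nat.div_lt_of_lt_mul (by linarith [hd])
      rcases Nat.le_one_iff_eq_zero_or_eq_one.1 (Nat.lt_succ_iff.1 h2) with h | h <;> rw [h] <;> norm_num
    ext v
    simp only [Range, Set.mem_setOf_eq, Set.mem_insert_iff, Set.mem_singleton_iff]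
    constructor
    · rintro ⟨n, hn, rfl⟩; exact hrange n
    · rintro (rfl | rfl)
      · -- witness n = b gives 0
        refine ⟨b, hb0, ?_⟩
        rw [f_eq a b hb0 b]
        have h1 : a*b/b = a := Nat.mul_div_cancel a hb0
        have h2 : a*b % b = 0 := Nat.mul_mod_left a b
        rw [h1, h2]
        have ht : (a*a) % b < b := Nat.mod_lt _ hb0
        have : (b*((a*a) % b) + a*0) / b^2 = 0 := by
          apply Nat.div_eq_of_lt
          nlinarith
        rw [this]; norm_num
      · -- witness for 1
        obtain ⟨m, -, hm⟩ := Nat.exists_mul_mod_eq_one_of_coprime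
          (Nat.Coprime.pow 2 2 hab) hb2
        set c := (a+b)*(b-1) with hc
        set n := m*c with hn
        have hm1 : 1 ≤ m := by
          rcases Nat.eq_zero_or_pos m with h | h
          · rw [h] at hm; simp at hm
          · exact h
        have hc1 : 1 ≤ c := by
          have : 1 ≤ b - 1 := by omega
          have : 1 ≤ a + b := by omega
          rw [hc]; exact Nat.one_le_iff_ne_zero.2 (by positivity)
        have hn1 : 1 ≤ n := Nat.one_le_iff_ne_zero.2 (by rw [hn]; positivity)
        -- a^2 * n ≡ c [MOD b^2]
        have hmod : a^2*m ≡ 1 [MOD b^2] := by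
          unfold Nat.ModEq
          rw [hm, Nat.mod_eq_of_lt hb2]
        have hcmod : a^2*n ≡ c [MOD b^2] := by
          have := hmod.mul_right c
          rw [one_mul] at this
          rw [hn, ← mul_assoc]
          exact this
        -- r = b-1
        have hrb : a*n % b = b - 1 := by
          have hdvd : b ∣ b^2 := Dvd.intro b (by ring)
          have h1 : a^2*n ≡ c [MOD b] := hcmod.of_dvd hdvd
          have h2 : c ≡ a*(b-1) [MOD b] := by
            have hce : c = a*(b-1) + (b-1)*b := by first | (rw [hc]; ring) | rw [hc]
            rw [hce]
            exact ((Nat.modEq_iff_dvd' (Nat.le_add_right _ _)).2 ⟨b-1, by rw [Nat.add_sub_cancel_left, Nat.mul_comm]⟩).symm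
          have h3 : a*(a*n) ≡ a*(b-1) [MOD b] := by
            have : a^2*n = a*(a*n) := by ring
            rw [← this]
            exact h1.trans h2
          have h4 : a*n ≡ b-1 [MOD b] := h3.cancel_left_of_coprime hab.symm
          have := h4
          unfold Nat.ModEq at this
          rw [Nat.mod_eq_of_lt (by omega : b - 1 < b)] at this
          exact this
        -- t = b-1
        have htb : (a*(a*n/b)) % b = b - 1 := by
          set q := a*n/b with hq
          have hqr : b*q + (b-1) = a*n := by
            have := Nat.div_add_mod (a*n) b
            rw [hrb] at this; exact this
          have h5 : a^2*n = b*(a*q) + a*(b-1) := by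
            calc a^2*n = a*(a*n) := by ring
            _ = a*(b*q + (b-1)) := by rw [hqr]
            _ = _ := by ring
          have h6 : b*(a*q) + a*(b-1) ≡ b*(b-1) + a*(b-1) [MOD b^2] := by
            rw [← h5]
            have hce2 : c = b*(b-1) + a*(b-1) := by first | (rw [hc]; ring) | rw [hc]
            rw [← hce2]
            exact hcmod
          have h7 : b*(a*q) ≡ b*(b-1) [MOD b^2] := h6.add_right_cancel' _
          have h8 : b*((a*q) % b) = b*((b-1) % b) := by
            have := h7
            unfold Nat.ModEq at this
            rw [(by ring : b^2 = b*b), Nat.mul_mod_mul_left, Nat.mul_mod_mul_left] at this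
            exact this
          have h9 : (a*q) % b = (b-1) % b := Nat.eq_of_mul_eq_mul_left hb0 h8
          rw [h9, Nat.mod_eq_of_lt (by omega)]
        refine ⟨n, hn1, ?_⟩
        rw [f_eq a b hb0 n, htb, hrb]
        have hge : b^2 ≤ b*(b-1) + a*(b-1) := by
          have h2a : 2 ≤ a := ha
          have : a + 1 ≤ b := hb
          nlinarith [Nat.sub_add_cancel (by omega : 1 ≤ b)]
        have hlt : b*(b-1) + a*(b-1) < 2*b^2 := by
          nlinarith [Nat.sub_add_cancel (by omega : 1 ≤ b)]
        have : (b*(b-1) + a*(b-1)) / b^2 = 1 :=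
          Nat.div_eq_of_lt_le (by linarith) (by linarith)
        rw [this]; norm_num
end

section
/- Let s ∈ ℕ be a positive integer. Then (i) Range(f_{2s + 1/2}) = {0, s}, and (ii) Range(f_{2s − 1 + 1/2}) = {0, s−1, s}. -/
lemma f_zero_of_int (α : ℝ) (n : ℕ) (m : ℤ) (h : α * (n : ℝ) = (m : ℝ)) : f α n = 0 := by
  unfold f
  rw [h, Int.floor_intCast]
  have h2 : α ^ 2 * (n : ℝ) = α * (m : ℝ) := by rw [← h]; ring
  rw [h2, sub_self]

lemma fA_even (s a : ℕ) : f (2 * (s : ℝ) + 1 / 2) (2 * a) = 0 := by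
  apply f_zero_of_int _ _ ((4 * s + 1) * a : ℤ)
  push_cast; ring

lemma fA_one (s b : ℕ) : f (2 * (s : ℝ) + 1 / 2) (4 * b + 1) = s := by
  set α : ℝ := 2 * (s : ℝ) + 1 / 2 with hα
  have h1 : α * ((4 * b + 1 : ℕ) : ℝ) = ((8 * s * b + 2 * s + 2 * b : ℤ) : ℝ) + 1 / 2 := by
    push_cast; ring
  have hf1 : ⌊α * ((4 * b + 1 : ℕ) : ℝ)⌋ = (8 * s * b + 2 * s + 2 * b : ℤ) := by
    rw [h1, Int.floor_intCast_add]; norm_num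
  have h2 : α * (((8 * s * b + 2 * s + 2 * b : ℤ) : ℤ) : ℝ)
      = ((16 * s ^ 2 * b + 8 * s * b + 4 * s ^ 2 + s + b : ℤ) : ℝ) := by
    push_cast; ring
  have h3 : α ^ 2 * ((4 * b + 1 : ℕ) : ℝ)
      = ((16 * s ^ 2 * b + 8 * s * b + 4 * s ^ 2 + 2 * s + b : ℤ) : ℝ) + 1 / 4 := by
    push_cast; ring
  unfold f
  rw [hf1, h2, Int.floor_intCast, h3, Int.floor_intCast_add]
  norm_num
  ring

lemma fA_three (s b : ℕ) : f (2 * (s : ℝ) + 1 / 2) (4 * b + 3) = s := by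
  set α : ℝ := 2 * (s : ℝ) + 1 / 2 with hα
  have h1 : α * ((4 * b + 3 : ℕ) : ℝ) = ((8 * s * b + 6 * s + 2 * b + 1 : ℤ) : ℝ) + 1 / 2 := by
    push_cast; ring
  have hf1 : ⌊α * ((4 * b + 3 : ℕ) : ℝ)⌋ = (8 * s * b + 6 * s + 2 * b + 1 : ℤ) := by
    rw [h1, Int.floor_intCast_add]; norm_num
  have h2 : α * (((8 * s * b + 6 * s + 2 * b + 1 : ℤ) : ℤ) : ℝ)
      = ((16 * s ^ 2 * b + 12 * s ^ 2 + 8 * s * b + 5 * s + b : ℤ) : ℝ) + 1 / 2 := by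
    push_cast; ring
  have h3 : α ^ 2 * ((4 * b + 3 : ℕ) : ℝ)
      = ((16 * s ^ 2 * b + 12 * s ^ 2 + 8 * s * b + 6 * s + b : ℤ) : ℝ) + 3 / 4 := by
    push_cast; ring
  unfold f
  rw [hf1, h2, Int.floor_intCast_add, h3, Int.floor_intCast_add]
  norm_num
  ring

lemma fB_even (s a : ℕ) : f (2 * (s : ℝ) - 1 + 1 / 2) (2 * a) = 0 := by
  apply f_zero_of_int _ _ ((4 * s - 1) * a : ℤ)
  push_cast; ring

lemma fB_one (s b : ℕ) : f (2 * (s : ℝ) - 1 + 1 / 2) (4 * b + 1) = s := by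
  set α : ℝ := 2 * (s : ℝ) - 1 + 1 / 2 with hα
  have h1 : α * ((4 * b + 1 : ℕ) : ℝ) = ((8 * s * b + 2 * s - 2 * b - 1 : ℤ) : ℝ) + 1 / 2 := by
    push_cast; ring
  have hf1 : ⌊α * ((4 * b + 1 : ℕ) : ℝ)⌋ = (8 * s * b + 2 * s - 2 * b - 1 : ℤ) := by
    rw [h1, Int.floor_intCast_add]; norm_num
  have h2 : α * (((8 * s * b + 2 * s - 2 * b - 1 : ℤ) : ℤ) : ℝ)
      = ((16 * s ^ 2 * b + 4 * s ^ 2 - 8 * s * b - 3 * s + b : ℤ) : ℝ) + 1 / 2 := by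
    push_cast; ring
  have h3 : α ^ 2 * ((4 * b + 1 : ℕ) : ℝ)
      = ((16 * s ^ 2 * b + 4 * s ^ 2 - 8 * s * b - 2 * s + b : ℤ) : ℝ) + 1 / 4 := by
    push_cast; ring
  unfold f
  rw [hf1, h2, Int.floor_intCast_add, h3, Int.floor_intCast_add]
  norm_num
  ring

lemma fB_three (s b : ℕ) : f (2 * (s : ℝ) - 1 + 1 / 2) (4 * b + 3) = (s : ℤ) - 1 := by
  set α : ℝ := 2 * (s : ℝ) - 1 + 1 / 2 with hα
  have h1 : α * ((4 * b + 3 : ℕ) : ℝ) = ((8 * s * b + 6 * s - 2 * b - 2 : ℤ) : ℝ) + 1 / 2 := by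
    push_cast; ring
  have hf1 : ⌊α * ((4 * b + 3 : ℕ) : ℝ)⌋ = (8 * s * b + 6 * s - 2 * b - 2 : ℤ) := by
    rw [h1, Int.floor_intCast_add]; norm_num
  have h2 : α * (((8 * s * b + 6 * s - 2 * b - 2 : ℤ) : ℤ) : ℝ)
      = ((16 * s ^ 2 * b + 12 * s ^ 2 - 8 * s * b - 7 * s + b + 1 : ℤ) : ℝ) := by
    push_cast; ring
  have h3 : α ^ 2 * ((4 * b + 3 : ℕ) : ℝ)
      = ((16 * s ^ 2 * b + 12 * s ^ 2 - 8 * s * b - 6 * s + b : ℤ) : ℝ) + 3 / 4 := by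
    push_cast; ring
  unfold f
  rw [hf1, h2, Int.floor_intCast, h3, Int.floor_intCast_add]
  norm_num
  ring

theorem stmt7 (s : ℕ) (hs : 1 ≤ s) :
    Range (2 * (s : ℝ) + 1 / 2) = {0, (s : ℤ)} ∧
    Range (2 * (s : ℝ) - 1 + 1 / 2) = {0, (s : ℤ) - 1, (s : ℤ)} := by
  constructor
  · ext v
    simp only [Range, Set.mem_setOf_eq, Set.mem_insert_iff, Set.mem_singleton_iff]
    constructor
    · rintro ⟨n, hn, rfl⟩
      rcases Nat.even_or_odd n with ⟨a, ha⟩ | hodd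
      · left
        have : n = 2 * a := by omega
        rw [this, fA_even]
      · right
        rcases Nat.odd_mod_four_iff.mp (Nat.odd_iff.mp hodd) with h | h
        · obtain ⟨b, hb⟩ : ∃ b, n = 4 * b + 1 := ⟨n / 4, by omega⟩
          rw [hb, fA_one]
        · obtain ⟨b, hb⟩ : ∃ b, n = 4 * b + 3 := ⟨n / 4, by omega⟩
          rw [hb, fA_three]
    · rintro (rfl | rfl)
      · exact ⟨2, by norm_num, by have := fA_even s 1; simpa using this⟩
      · exact ⟨1, le_refl 1, by have := fA_one s 0; simpa using this⟩
  · ext v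
    simp only [Range, Set.mem_setOf_eq, Set.mem_insert_iff, Set.mem_singleton_iff]
    constructor
    · rintro ⟨n, hn, rfl⟩
      rcases Nat.even_or_odd n with ⟨a, ha⟩ | hodd
      · left
        have : n = 2 * a := by omega
        rw [this, fB_even]
      · rcases Nat.odd_mod_four_iff.mp (Nat.odd_iff.mp hodd) with h | h
        · obtain ⟨b, hb⟩ : ∃ b, n = 4 * b + 1 := ⟨n / 4, by omega⟩
          right; right
          rw [hb, fB_one]
        · obtain ⟨b, hb⟩ : ∃ b, n = 4 * b + 3 := ⟨n / 4, by omega⟩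
          right; left
          rw [hb, fB_three]
    · rintro (rfl | rfl | rfl)
      · exact ⟨2, by norm_num, by have := fB_even s 1; simpa using this⟩
      · exact ⟨3, by norm_num, by have := fB_three s 0; simpa using this⟩
      · exact ⟨1, le_refl 1, by have := fB_one s 0; simpa using this⟩
end

section
/- Let b ∈ ℕ with b ≥ 2, s ∈ ℕ ∪ {0}, u ∈ ℤ with 0 ≤ u ≤ b−1, and a ∈ ℤ with 1 ≤ a ≤ b−1. Then for every positive integer n, f_{sb + u + a/b}(n) = s·φ_{a,b}(n) + f_{u + a/b}(n), where φ_{a,b}(n) = na − ⌊na/b⌋·b. -/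
theorem stmt8 (b : ℕ) (hb : 2 ≤ b) (s : ℕ) (u a : ℤ)
    (hu0 : 0 ≤ u) (hu1 : u ≤ (b : ℤ) - 1) (ha0 : 1 ≤ a) (ha1 : a ≤ (b : ℤ) - 1)
    (n : ℕ) (hn : 1 ≤ n) :
    f ((s : ℝ) * (b : ℝ) + (u : ℝ) + (a : ℝ) / (b : ℝ)) n =
      (s : ℤ) * ((n : ℤ) * a - ⌊((n : ℝ) * (a : ℝ)) / (b : ℝ)⌋ * (b : ℤ)) +
        f ((u : ℝ) + (a : ℝ) / (b : ℝ)) n := by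
  have hbne : (b : ℝ) ≠ 0 := by
    have : (0:ℝ) < b := by exact_mod_cast Nat.lt_of_lt_of_le (by norm_num) hb
    linarith
  set β : ℝ := (u : ℝ) + (a : ℝ) / (b : ℝ) with hβ
  set q : ℤ := ⌊((n : ℝ) * (a : ℝ)) / (b : ℝ)⌋ with hq
  have h1 : ⌊β * (n : ℝ)⌋ = u * n + q := by
    have e : β * (n : ℝ) = ((u * n : ℤ) : ℝ) + ((n : ℝ) * (a : ℝ)) / (b : ℝ) := by
      rw [hβ]; push_cast; ring
    rw [e, Int.floor_intCast_add, hq]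
  have hαn : ((s : ℝ) * (b : ℝ) + (u : ℝ) + (a : ℝ) / (b : ℝ)) * (n : ℝ)
      = β * (n : ℝ) + (((s : ℤ) * b * n : ℤ) : ℝ) := by
    push_cast; ring
  have hfαn : ⌊((s : ℝ) * (b : ℝ) + (u : ℝ) + (a : ℝ) / (b : ℝ)) * (n : ℝ)⌋
      = ⌊β * (n : ℝ)⌋ + (s : ℤ) * b * n := by
    rw [hαn, Int.floor_add_intCast]
  have h2 : ⌊((s : ℝ) * (b : ℝ) + (u : ℝ) + (a : ℝ) / (b : ℝ)) ^ 2 * (n : ℝ)⌋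
      = ⌊β ^ 2 * (n : ℝ)⌋
        + (2 * s * b * u * n + 2 * (s : ℤ) * a * n + (s : ℤ) ^ 2 * b ^ 2 * n) := by
    have e : ((s : ℝ) * (b : ℝ) + (u : ℝ) + (a : ℝ) / (b : ℝ)) ^ 2 * (n : ℝ)
        = β ^ 2 * (n : ℝ)
          + ((2 * s * b * u * n + 2 * (s : ℤ) * a * n
            + (s : ℤ) ^ 2 * b ^ 2 * n : ℤ) : ℝ) := by
      rw [hβ]; field_simp; push_cast; ring
    rw [e, Int.floor_add_intCast]
  have h3 : ⌊((s : ℝ) * (b : ℝ) + (u : ℝ) + (a : ℝ) / (b : ℝ))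
        * ((⌊((s : ℝ) * (b : ℝ) + (u : ℝ) + (a : ℝ) / (b : ℝ)) * (n : ℝ)⌋ : ℤ) : ℝ)⌋
      = ⌊β * ((⌊β * (n : ℝ)⌋ : ℤ) : ℝ)⌋
        + ((s : ℤ) * b * u * n + (s : ℤ) * a * n
            + (s : ℤ) * b * (u * n + q) + (s : ℤ) ^ 2 * b ^ 2 * n) := by
    have e : ((s : ℝ) * (b : ℝ) + (u : ℝ) + (a : ℝ) / (b : ℝ))
        * ((⌊((s : ℝ) * (b : ℝ) + (u : ℝ) + (a : ℝ) / (b : ℝ)) * (n : ℝ)⌋ : ℤ) : ℝ)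
        = β * ((⌊β * (n : ℝ)⌋ : ℤ) : ℝ)
          + (((s : ℤ) * b * u * n + (s : ℤ) * a * n
              + (s : ℤ) * b * (u * n + q) + (s : ℤ) ^ 2 * b ^ 2 * n : ℤ) : ℝ) := by
      rw [hfαn, h1]
      rw [hβ]; field_simp; push_cast; ring
    rw [e, Int.floor_add_intCast, h1]
  simp only [f, h2, h3]
  ring
end

section
/- Let b ∈ ℕ with b ≥ 2 and s ∈ ℕ a positive integer. Then Range(f_{sb + 1/b}) = s·⟦0, b−1⟧ = {sr : r ∈ ℤ, 0 ≤ r ≤ b−1}. -/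
lemma floorDiv (m : ℤ) (d : ℕ) : ⌊(m:ℝ)/(d:ℝ)⌋ = m / (d:ℤ) := by
  rw [show (m:ℝ)/(d:ℝ) = (((m:ℚ)/(d:ℚ) : ℚ) : ℝ) by push_cast; ring,
    Rat.floor_cast, Rat.floor_intCast_div_natCast]

lemma floor_aux (S : ℤ) (d : ℕ) (x : ℤ) :
    ⌊((S:ℝ) + 1/(d:ℝ)) * (x:ℝ)⌋ = S * x + x / (d:ℤ) := by
  rcases Nat.eq_zero_or_pos d with rfl | hd
  · simp [floorDiv, ← Int.cast_mul]
  have hd' : (d:ℝ) ≠ 0 := by positivity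
  have h : ((S:ℝ) + 1/(d:ℝ)) * (x:ℝ) = ((S*x : ℤ) : ℝ) + (x:ℝ)/(d:ℝ) := by
    push_cast; field_simp
  rw [h, Int.floor_intCast_add, floorDiv]

lemma key (b s : ℕ) (hb : 2 ≤ b) (n : ℕ) :
    f ((s : ℝ) * (b : ℝ) + 1 / (b : ℝ)) n = (s:ℤ) * ((n:ℤ) % (b:ℤ)) := by
  have hb0 : 0 < b := by omega
  have hbz : (0:ℤ) < (b:ℤ) := by exact_mod_cast hb0
  have hbR : (b:ℝ) ≠ 0 := by positivity
  have h1 : ⌊((s : ℝ) * (b : ℝ) + 1 / (b : ℝ)) * (n:ℝ)⌋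
      = (s:ℤ)*b*n + (n:ℤ) / (b:ℤ) := by
    rw [show ((s : ℝ) * (b : ℝ) + 1 / (b : ℝ)) * (n:ℝ)
        = ((((s:ℤ)*b : ℤ):ℝ) + 1/(b:ℝ)) * (n:ℝ) by push_cast; ring]
    exact floor_aux ((s:ℤ)*b) b (n:ℤ)
  set M : ℤ := (s:ℤ)*b*n + (n:ℤ) / (b:ℤ) with hM
  have h2 : ⌊((s : ℝ) * (b : ℝ) + 1 / (b : ℝ)) * (M:ℝ)⌋
      = (s:ℤ)*b*M + M / (b:ℤ) := by
    rw [show ((s : ℝ) * (b : ℝ) + 1 / (b : ℝ)) * (M:ℝ)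
        = ((((s:ℤ)*b : ℤ):ℝ) + 1/(b:ℝ)) * (M:ℝ) by push_cast; ring]
    exact floor_aux ((s:ℤ)*b) b M
  have h3 : ⌊((s : ℝ) * (b : ℝ) + 1 / (b : ℝ))^2 * (n:ℝ)⌋
      = ((s:ℤ)*s*b*b + 2*s)*n + (n:ℤ) / ((b*b : ℕ):ℤ) := by
    rw [show ((s : ℝ) * (b : ℝ) + 1 / (b : ℝ))^2 * (n:ℝ)
        = ((((s:ℤ)*s*b*b + 2*s : ℤ):ℝ) + 1/((b*b : ℕ):ℝ)) * (n:ℝ) by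
      push_cast; field_simp; ring]
    exact floor_aux ((s:ℤ)*s*b*b + 2*s) (b*b) (n:ℤ)
  rw [f, h1, h2, h3]
  -- arithmetic: simplify integer divisions
  have hq : M / (b:ℤ) = (s:ℤ)*n + ((n:ℤ)/(b:ℤ))/(b:ℤ) := by
    rw [hM, show (s:ℤ)*b*n + (n:ℤ)/(b:ℤ) = (n:ℤ)/(b:ℤ) + (b:ℤ)*((s:ℤ)*n) by ring,
      Int.add_mul_ediv_left _ _ (by omega : (b:ℤ) ≠ 0)]
    ring
  have hdd : (n:ℤ) / ((b*b : ℕ):ℤ) = ((n:ℤ)/(b:ℤ))/(b:ℤ) := by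
    exact_mod_cast congrArg (Nat.cast : ℕ → ℤ) (Nat.div_div_eq_div_mul n b b).symm
  have hmod : (n:ℤ) % (b:ℤ) = (n:ℤ) - (b:ℤ) * ((n:ℤ)/(b:ℤ)) := Int.emod_def _ _
  rw [hq, hdd, hmod, hM]
  ring

theorem stmt9 (b : ℕ) (hb : 2 ≤ b) (s : ℕ) (hs : 1 ≤ s) :
    Range ((s : ℝ) * (b : ℝ) + 1 / (b : ℝ)) =
      {v : ℤ | ∃ r : ℤ, 0 ≤ r ∧ r ≤ (b : ℤ) - 1 ∧ v = (s : ℤ) * r} := by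
  have hbz : (0:ℤ) < (b:ℤ) := by exact_mod_cast (by omega : 0 < b)
  ext v
  constructor
  · rintro ⟨n, hn, rfl⟩
    refine ⟨(n:ℤ) % (b:ℤ), Int.emod_nonneg _ (by omega), ?_, (key b s hb n)⟩
    have := Int.emod_lt_of_pos (n:ℤ) hbz
    omega
  · rintro ⟨r, hr0, hr1, rfl⟩
    refine ⟨b + r.toNat, by omega, ?_⟩
    rw [key b s hb]
    congr 1
    have : ((b + r.toNat : ℕ) : ℤ) = (b:ℤ) + r := by
      push_cast; omega
    rw [this]
    rw [show (b:ℤ) + r = r + (b:ℤ) * 1 by ring, Int.add_mul_emod_self_left,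
      Int.emod_eq_of_lt hr0 (by omega)]
end

section
/- Let b ∈ ℕ with b ≥ 2, s ∈ ℕ ∪ {0}, and u ∈ ℤ with 0 ≤ u ≤ b−1. If n = bt + r is a positive integer with t, r ∈ ℤ, 0 ≤ t ≤ b−1, and 0 ≤ r ≤ b−1, then f_{sb + u + 1/b}(n) = sr + ⌊2ur/b + t/b + r/b²⌋ − ⌊ur/b + t/b⌋. -/
theorem stmt10 (b : ℕ) (hb : 2 ≤ b) (s : ℕ) (u t r : ℤ)
    (hu0 : 0 ≤ u) (hu1 : u ≤ (b : ℤ) - 1)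
    (ht0 : 0 ≤ t) (ht1 : t ≤ (b : ℤ) - 1)
    (hr0 : 0 ≤ r) (hr1 : r ≤ (b : ℤ) - 1)
    (n : ℕ) (hn : 1 ≤ n) (hnbt : (n : ℤ) = (b : ℤ) * t + r) :
    f ((s : ℝ) * (b : ℝ) + (u : ℝ) + 1 / (b : ℝ)) n =
      (s : ℤ) * r +
        ⌊2 * (u : ℝ) * (r : ℝ) / (b : ℝ) + (t : ℝ) / (b : ℝ) + (r : ℝ) / (b : ℝ) ^ 2⌋ -
        ⌊(u : ℝ) * (r : ℝ) / (b : ℝ) + (t : ℝ) / (b : ℝ)⌋ := by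
  have hB : (0:ℝ) < (b:ℝ) := by
    have : 0 < b := by omega
    exact_mod_cast this
  have hBne : (b:ℝ) ≠ 0 := ne_of_gt hB
  have hnR : (n:ℝ) = (b:ℝ) * (t:ℝ) + (r:ℝ) := by exact_mod_cast hnbt
  have hrR0 : (0:ℝ) ≤ (r:ℝ) := by exact_mod_cast hr0
  have hrR1 : (r:ℝ) ≤ (b:ℝ) - 1 := by
    have : ((r:ℝ) : ℝ) ≤ (((b:ℤ) - 1 : ℤ) : ℝ) := by exact_mod_cast hr1
    push_cast at this; linarith
  have hrb0 : (0:ℝ) ≤ (r:ℝ)/(b:ℝ) := div_nonneg hrR0 hB.le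
  have hrb1 : (r:ℝ)/(b:ℝ) < 1 := by rw [div_lt_one hB]; linarith
  set α : ℝ := (s : ℝ) * (b : ℝ) + (u : ℝ) + 1 / (b : ℝ) with hα
  have h1 : α * (n:ℝ) = (((((s:ℤ)*(b:ℤ)+u)*(n:ℤ) + t) : ℤ) : ℝ) + (r:ℝ)/(b:ℝ) := by
    rw [hα]
    push_cast
    rw [hnR]
    field_simp
    ring
  have hf1 : (⌊α * (n:ℝ)⌋ : ℤ) = ((s:ℤ)*(b:ℤ)+u)*(n:ℤ) + t := by
    rw [h1, Int.floor_intCast_add, Int.floor_eq_zero_iff.2 ⟨hrb0, hrb1⟩, add_zero]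
  have h2 : α ^ 2 * (n:ℝ) =
      ((((((s:ℤ)*(b:ℤ)+u)^2*(n:ℤ) + 2*((s:ℤ)*(b:ℤ)+u)*t + 2*(s:ℤ)*r) : ℤ) : ℝ))
        + (2 * (u : ℝ) * (r : ℝ) / (b : ℝ) + (t : ℝ) / (b : ℝ) + (r : ℝ) / (b : ℝ) ^ 2) := by
    rw [hα]
    push_cast
    rw [hnR]
    field_simp
    ring
  have h3 : α * ((⌊α * (n:ℝ)⌋ : ℤ) : ℝ) =
      ((((((s:ℤ)*(b:ℤ)+u)^2*(n:ℤ) + 2*((s:ℤ)*(b:ℤ)+u)*t + (s:ℤ)*r) : ℤ) : ℝ))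
        + ((u : ℝ) * (r : ℝ) / (b : ℝ) + (t : ℝ) / (b : ℝ)) := by
    rw [hf1, hα]
    push_cast
    rw [hnR]
    field_simp
    ring
  unfold f
  rw [h2, h3, Int.floor_intCast_add, Int.floor_intCast_add]
  ring
end

section
/- Let b ∈ ℕ with b ≥ 2 and s ∈ ℕ ∪ {0}. Then Range(f_{sb + 1 + 1/b}) = (s·⟦0, b−1⟧) ∪ (s·⟦1, b−1⟧ + {1}) = {sr : 0 ≤ r ≤ b−1} ∪ {sr + 1 : 1 ≤ r ≤ b−1}. -/
private lemma floor_div_real (m : ℤ) (d : ℕ) : ⌊((m:ℝ)/(d:ℝ))⌋ = m / (d:ℤ) := by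
  rw [show ((m:ℝ)/(d:ℝ)) = ((((m:ℚ)/(d:ℚ)) : ℚ) : ℝ) by push_cast; ring, Rat.floor_cast,
    Rat.floor_intCast_div_natCast]

private lemma ediv_eval {a B k : ℤ} (hB : 0 < B) (h1 : k * B ≤ a) (h2 : a < (k+1)*B) :
    a / B = k := by
  have h3 := (Int.le_ediv_iff_mul_le hB).2 h1
  have h4 := (Int.ediv_lt_iff_lt_mul hB).2 h2
  omega

set_option maxHeartbeats 1600000 in
private lemma g_eval (B S t v m : ℤ) (hB : 2 ≤ B) (ht : 0 ≤ t) (ht' : t < B)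
    (hv : 0 ≤ v) (hv' : v < B) :
    (S*B^2+B+1)^2*((m*B+v)*B+t)/B^2
      - (S*B^2+B+1)*((S*B^2+B+1)*((m*B+v)*B+t)/B)/B
    = S*t + ((if B ≤ 2*t+v then 1 else 0) + (if 2*B ≤ 2*t+v then 1 else 0)
        - (if B ≤ t+v then 1 else 0)) := by
  have hB0 : (0:ℤ) < B := by omega
  have hBne : B ≠ 0 := by omega
  have hB2 : (0:ℤ) < B^2 := by positivity
  have hB2ne : B^2 ≠ 0 := by positivity
  set q : ℤ := m*B+v with hq
  set c : ℤ := S*B^2+B+1 with hc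
  have e1 : c*(q*B+t)/B = c*q + (S*B+1)*t := by
    have h : c*(q*B+t) = t + (c*q + (S*B+1)*t)*B := by rw [hc]; ring
    rw [h, Int.add_mul_ediv_right _ _ hBne, Int.ediv_eq_zero_of_lt ht ht', zero_add]
  set E : ℤ := (t+v)/B with hE
  have e2 : (c*q + (S*B+1)*t)/B = E + ((S*B+1)*q + S*t + m) := by
    have h : c*q + (S*B+1)*t = (t+v) + ((S*B+1)*q + S*t + m)*B := by rw [hc, hq]; ring
    rw [h, Int.add_mul_ediv_right _ _ hBne, hE]
  have e3 : c*(c*q + (S*B+1)*t)/B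
      = (c*q+(S*B+1)*t)/B + (S*B+1)*(c*q+(S*B+1)*t) := by
    have h : c*(c*q + (S*B+1)*t)
        = (c*q + (S*B+1)*t) + ((S*B+1)*(c*q+(S*B+1)*t))*B := by rw [hc]; ring
    rw [h, Int.add_mul_ediv_right _ _ hBne]
  set D : ℤ := (B*(2*t+v)+t)/B^2 with hD
  have e4 : c^2*(q*B+t)/B^2
      = D + (2*S*t + m + (S*B+1)^2*(q*B+t) + 2*(S*B+1)*q) := by
    have h : c^2*(q*B+t)
        = (B*(2*t+v)+t) + (2*S*t + m + (S*B+1)^2*(q*B+t) + 2*(S*B+1)*q)*B^2 := by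
      rw [hc, hq]; ring
    rw [h, Int.add_mul_ediv_right _ _ hB2ne, hD]
  have hEval : E = if B ≤ t+v then 1 else 0 := by
    rw [hE]; split_ifs with h
    · exact ediv_eval hB0 (by omega) (by omega)
    · exact ediv_eval hB0 (by omega) (by omega)
  have hDval : D = (if B ≤ 2*t+v then 1 else 0) + (if 2*B ≤ 2*t+v then 1 else 0) := by
    rw [hD]; split_ifs with h1 h2
    · refine ediv_eval hB2 ?_ ?_
      · nlinarith [mul_le_mul_of_nonneg_left h2 hB0.le]
      · nlinarith [mul_le_mul_of_nonneg_left (show 2*t+v ≤ 3*B-3 by omega) hB0.le]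
    · refine ediv_eval hB2 ?_ ?_
      · nlinarith [mul_le_mul_of_nonneg_left h1 hB0.le]
      · nlinarith [mul_le_mul_of_nonneg_left (show 2*t+v ≤ 2*B-1 by omega) hB0.le]
    · omega
    · refine ediv_eval hB2 ?_ ?_
      · nlinarith [mul_nonneg hB0.le (show (0:ℤ) ≤ 2*t+v by omega)]
      · nlinarith [mul_le_mul_of_nonneg_left (show 2*t+v ≤ B-1 by omega) hB0.le]
  rw [e4, e1, e3, e2, hEval, hDval, hc]
  ring

set_option maxHeartbeats 800000 in
private lemma f_formula (b s : ℕ) (hb : 2 ≤ b) (n : ℕ) (t v m : ℤ)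
    (ht : 0 ≤ t) (ht' : t < (b:ℤ)) (hv : 0 ≤ v) (hv' : v < (b:ℤ))
    (hn : (n:ℤ) = (m*(b:ℤ)+v)*(b:ℤ) + t) :
    f ((s : ℝ) * (b : ℝ) + 1 + 1 / (b : ℝ)) n
      = (s:ℤ)*t + ((if (b:ℤ) ≤ 2*t+v then 1 else 0) + (if 2*(b:ℤ) ≤ 2*t+v then 1 else 0)
        - (if (b:ℤ) ≤ t+v then 1 else 0)) := by
  have hbR : (0:ℝ) < (b:ℝ) := by exact_mod_cast (by omega : 0 < b)
  set c : ℤ := (s:ℤ)*(b:ℤ)^2 + (b:ℤ) + 1 with hc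
  have hα : (s : ℝ) * (b : ℝ) + 1 + 1 / (b : ℝ) = ((c:ℝ))/((b:ℕ):ℝ) := by
    rw [hc]; push_cast; field_simp
  have h1 : ⌊((s : ℝ) * (b : ℝ) + 1 + 1 / (b : ℝ)) * (n : ℝ)⌋ = c*(n:ℤ)/(b:ℤ) := by
    rw [hα, show ((c:ℝ))/((b:ℕ):ℝ) * (n:ℝ) = ((c*(n:ℤ) : ℤ):ℝ)/((b:ℕ):ℝ) by
      push_cast; ring, floor_div_real]
  have h2 : ⌊((s : ℝ) * (b : ℝ) + 1 + 1 / (b : ℝ))^2 * (n : ℝ)⌋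
      = c^2*(n:ℤ)/((b:ℤ)^2) := by
    rw [hα, show (((c:ℝ))/((b:ℕ):ℝ))^2 * (n:ℝ) = ((c^2*(n:ℤ) : ℤ):ℝ)/(((b^2:ℕ)):ℝ) by
      push_cast; ring, floor_div_real,
      show ((b^2:ℕ):ℤ) = (b:ℤ)^2 by push_cast; ring]
  have h3 : ⌊((s : ℝ) * (b : ℝ) + 1 + 1 / (b : ℝ))
        * (((c*(n:ℤ)/(b:ℤ) : ℤ)):ℝ)⌋ = c*(c*(n:ℤ)/(b:ℤ))/(b:ℤ) := by
    rw [hα, show ((c:ℝ))/((b:ℕ):ℝ) * (((c*(n:ℤ)/(b:ℤ) : ℤ)):ℝ)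
        = ((c*(c*(n:ℤ)/(b:ℤ)) : ℤ):ℝ)/((b:ℕ):ℝ) by push_cast; ring, floor_div_real]
  rw [f, h1, h2, h3, hn, hc]
  exact g_eval (b:ℤ) (s:ℤ) t v m (by exact_mod_cast hb) ht ht' hv hv'

theorem stmt12 (b : ℕ) (hb : 2 ≤ b) (s : ℕ) :
    Range ((s : ℝ) * (b : ℝ) + 1 + 1 / (b : ℝ)) =
      {w : ℤ | ∃ r : ℤ, 0 ≤ r ∧ r ≤ (b : ℤ) - 1 ∧ w = (s : ℤ) * r} ∪
      {w : ℤ | ∃ r : ℤ, 1 ≤ r ∧ r ≤ (b : ℤ) - 1 ∧ w = (s : ℤ) * r + 1} := by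
  have hB : (2:ℤ) ≤ (b:ℤ) := by exact_mod_cast hb
  ext w
  constructor
  · rintro ⟨n, hn, rfl⟩
    set N : ℤ := (n:ℤ) with hN
    have hB0 : (0:ℤ) < (b:ℤ) := by omega
    set t : ℤ := N % (b:ℤ) with hts
    set q : ℤ := N / (b:ℤ) with hqs
    set v : ℤ := q % (b:ℤ) with hvs
    set m : ℤ := q / (b:ℤ) with hms
    have ht : 0 ≤ t := Int.emod_nonneg N (by omega)
    have ht' : t < (b:ℤ) := Int.emod_lt_of_pos N hB0
    have hv : 0 ≤ v := Int.emod_nonneg q (by omega)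
    have hv' : v < (b:ℤ) := Int.emod_lt_of_pos q hB0
    have h2' : m * (b:ℤ) + v = q := Int.ediv_mul_add_emod q _
    have h1' : q * (b:ℤ) + t = N := Int.ediv_mul_add_emod N _
    have hdecomp : (n:ℤ) = (m*(b:ℤ)+v)*(b:ℤ) + t := by rw [h2', h1', hN]
    have hval := f_formula b s hb n t v m ht ht' hv hv' hdecomp
    rw [hval]
    split_ifs with h1 h2 h3
    · exact Or.inr ⟨t, by omega, by omega, by ring⟩
    · exfalso; omega
    · exact Or.inl ⟨t, by omega, by omega, by ring⟩
    · exact Or.inr ⟨t, by omega, by omega, by ring⟩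
    · exfalso; omega
    · exfalso; omega
    · exfalso; omega
    · exact Or.inl ⟨t, by omega, by omega, by ring⟩
  · rintro (⟨r, hr0, hr1, rfl⟩ | ⟨r, hr0, hr1, rfl⟩)
    · rcases eq_or_lt_of_le hr0 with h0 | h0
      · -- r = 0 : use n = b, t = 0, v = 1, m = 0
        refine ⟨b, by omega, ?_⟩
        have hv := f_formula b s hb b 0 1 0 le_rfl (by omega) (by omega) (by omega)
          (by push_cast; ring)
        rw [hv, if_neg (by omega), if_neg (by omega), if_neg (by omega), ← h0]
        ring
      · -- r ≥ 1 : n = (b - r)*b + r, t = r, v = b - r, m = 0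
        refine ⟨((b:ℤ) - r).toNat * b + r.toNat, by omega, ?_⟩
        have hcast : ((((b:ℤ) - r).toNat * b + r.toNat : ℕ) : ℤ)
            = (0*(b:ℤ) + ((b:ℤ)-r))*(b:ℤ) + r := by
          push_cast [Int.toNat_of_nonneg (show (0:ℤ) ≤ (b:ℤ)-r by omega),
            Int.toNat_of_nonneg hr0]
          ring
        have hv := f_formula b s hb (((b:ℤ) - r).toNat * b + r.toNat) r ((b:ℤ)-r) 0
          (by omega) (by omega) (by omega) (by omega) hcast
        rw [hv, if_pos (by omega), if_neg (by omega), if_pos (by omega)]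
        ring
    · -- n = (b - 1 - r)*b + r, t = r, v = b - 1 - r, m = 0
      refine ⟨((b:ℤ) - 1 - r).toNat * b + r.toNat, by omega, ?_⟩
      have hcast : ((((b:ℤ) - 1 - r).toNat * b + r.toNat : ℕ) : ℤ)
          = (0*(b:ℤ) + ((b:ℤ)-1-r))*(b:ℤ) + r := by
        push_cast [Int.toNat_of_nonneg (show (0:ℤ) ≤ (b:ℤ)-1-r by omega),
          Int.toNat_of_nonneg (by omega : (0:ℤ) ≤ r)]
        ring
      have hv := f_formula b s hb (((b:ℤ) - 1 - r).toNat * b + r.toNat) r ((b:ℤ)-1-r) 0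
        (by omega) (by omega) (by omega) (by omega) hcast
      rw [hv, if_pos (by omega), if_neg (by omega), if_neg (by omega)]
      ring
end

section
/- Let b ∈ ℕ with b ≥ 2 and s ∈ ℕ a positive integer. Then Range(f_{sb − 1 + 1/b}) = (s·⟦0, b−1⟧) ∪ (s·⟦1, b−1⟧ − {1}) = {sr : 0 ≤ r ≤ b−1} ∪ {sr − 1 : 1 ≤ r ≤ b−1}. -/
lemma floor_int_div (a B : ℤ) (hB : 0 < B) : ⌊(a : ℝ) / (B : ℝ)⌋ = a / B := by
  have hB' : (0:ℝ) < (B:ℝ) := by exact_mod_cast hB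
  have h0 : 0 ≤ a % B := Int.emod_nonneg a hB.ne'
  have h1 : a % B < B := Int.emod_lt_of_pos a hB
  have hid : (a:ℝ) = (B:ℝ) * ((a / B : ℤ):ℝ) + ((a % B : ℤ):ℝ) := by
    exact_mod_cast congrArg (fun z : ℤ => (z : ℝ)) (Int.mul_ediv_add_emod a B).symm
  have key : (a:ℝ)/(B:ℝ) = ((a % B : ℤ):ℝ)/(B:ℝ) + ((a / B : ℤ):ℝ) := by
    rw [hid]; field_simp; ring
  rw [key, Int.floor_add_intCast]
  have : ⌊((a % B : ℤ):ℝ)/(B:ℝ)⌋ = 0 := by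
    apply Int.floor_eq_zero_iff.2
    constructor
    · positivity
    · rw [div_lt_one hB']; exact_mod_cast h1
  omega

lemma div_eq_of (B a t c : ℤ) (hB : 0 < B) (h : a = B * t + c) (h0 : 0 ≤ c)
    (h1 : c < B) : a / B = t := by
  have h2 : a = c + B * t := by omega
  rw [h2, Int.add_mul_ediv_left c t hB.ne', Int.ediv_eq_zero_of_lt h0 h1, zero_add]

theorem stmt13 (b : ℕ) (hb : 2 ≤ b) (s : ℕ) (hs : 1 ≤ s) :
    Range ((s : ℝ) * (b : ℝ) - 1 + 1 / (b : ℝ)) =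
      {w : ℤ | ∃ r : ℤ, 0 ≤ r ∧ r ≤ (b : ℤ) - 1 ∧ w = (s : ℤ) * r} ∪
      {w : ℤ | ∃ r : ℤ, 1 ≤ r ∧ r ≤ (b : ℤ) - 1 ∧ w = (s : ℤ) * r - 1} := by
  have hb2 : (2:ℤ) ≤ (b:ℤ) := by exact_mod_cast hb
  have hs1 : (1:ℤ) ≤ (s:ℤ) := by exact_mod_cast hs
  set α : ℝ := (s : ℝ) * (b : ℝ) - 1 + 1 / (b : ℝ) with hα0
  set B : ℤ := (b:ℤ) with hBdef
  set S : ℤ := (s:ℤ) with hSdef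
  set P : ℤ := S*B^2 - B + 1 with hPdef
  have hBpos : 0 < B := by omega
  have hB2pos : 0 < B^2 := by positivity
  have hBR : (0:ℝ) < (B:ℝ) := by exact_mod_cast hBpos
  have hα : α = (P:ℝ)/(B:ℝ) := by
    rw [hα0, hPdef, hSdef, hBdef]; push_cast; field_simp
  have keyf : ∀ n : ℕ, f α n = (P^2*(n:ℤ))/(B^2) - (P * ((P*(n:ℤ))/B))/B := by
    intro n
    have h1 : ⌊α * (n:ℝ)⌋ = (P*(n:ℤ))/B := by
      rw [hα, show (P:ℝ)/(B:ℝ) * (n:ℝ) = ((P*(n:ℤ) : ℤ):ℝ)/(B:ℝ) by push_cast; ring]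
      exact floor_int_div _ _ hBpos
    have h2 : ⌊α^2 * (n:ℝ)⌋ = (P^2*(n:ℤ))/(B^2) := by
      rw [hα, show ((P:ℝ)/(B:ℝ))^2 * (n:ℝ) = ((P^2*(n:ℤ) : ℤ):ℝ)/((B^2 : ℤ):ℝ) by
        push_cast; field_simp]
      exact floor_int_div _ _ hB2pos
    have h3 : ⌊α * (((P*(n:ℤ))/B : ℤ):ℝ)⌋ = (P*((P*(n:ℤ))/B))/B := by
      rw [hα, show (P:ℝ)/(B:ℝ) * (((P*(n:ℤ))/B : ℤ):ℝ)
            = ((P*((P*(n:ℤ))/B) : ℤ):ℝ)/(B:ℝ) by push_cast; ring]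
      exact floor_int_div _ _ hBpos
    rw [f, h1, h2, h3]
  ext w
  simp only [Range, Set.mem_setOf_eq, Set.mem_union]
  constructor
  · rintro ⟨n, hn, rfl⟩
    rw [keyf n]
    set q : ℤ := (P*(n:ℤ))/B with hq
    set r : ℤ := (P*(n:ℤ)) % B with hr
    have hqr : P*(n:ℤ) = B*q + r := (Int.mul_ediv_add_emod _ _).symm
    have hr0 : 0 ≤ r := Int.emod_nonneg _ hBpos.ne'
    have hr1 : r < B := Int.emod_lt_of_pos _ hBpos
    set Q : ℤ := (P*q)/B with hQ
    set R : ℤ := (P*q) % B with hR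
    have hQR : P*q = B*Q + R := (Int.mul_ediv_add_emod _ _).symm
    have hR0 : 0 ≤ R := Int.emod_nonneg _ hBpos.ne'
    have hR1 : R < B := Int.emod_lt_of_pos _ hBpos
    have hnum : P^2*(n:ℤ) = B^2*(Q + S*r) + (B*R - (B-1)*r) := by
      linear_combination P * hqr + B * hQR + r * hPdef
    have hBRb : B*R ≤ B*(B-1) := mul_le_mul_of_nonneg_left (by omega) (by omega)
    have hBB : B*(B-1) = B^2 - B := by ring
    have hrr : 0 ≤ (B-1)*r := mul_nonneg (by omega) hr0
    have hBRnn : 0 ≤ B*R := mul_nonneg (by omega) hR0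
    have hrb : (B-1)*r ≤ (B-1)*(B-1) := mul_le_mul_of_nonneg_left (by omega) (by omega)
    have hBB1 : (B-1)*(B-1) = B^2 - 2*B + 1 := by ring
    have hc_ub : B*R - (B-1)*r < B^2 := by linarith
    by_cases hc : 0 ≤ B*R - (B-1)*r
    · left
      refine ⟨r, hr0, by omega, ?_⟩
      rw [div_eq_of (B^2) _ (Q + S*r) _ hB2pos hnum hc hc_ub]
      ring
    · right
      have hrpos : 1 ≤ r := by
        by_contra h
        have hr00 : r = 0 := by omega
        rw [hr00, mul_zero, sub_zero] at hc
        exact hc hBRnn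
      refine ⟨r, hrpos, by omega, ?_⟩
      have hnum' : P^2*(n:ℤ) = B^2*(Q + S*r - 1) + (B*R - (B-1)*r + B^2) := by
        linear_combination hnum
      have hlb : 0 ≤ B*R - (B-1)*r + B^2 := by linarith
      rw [div_eq_of (B^2) _ (Q + S*r - 1) _ hB2pos hnum' hlb (by omega)]
      ring
  · rintro (⟨r, hr0, hr1, rfl⟩ | ⟨r, hr0, hr1, rfl⟩)
    · -- w = S * r ; witness n = B*(r+B-1)+r
      set m : ℤ := r + B - 1 with hm
      set N : ℤ := B*m + r with hN
      have hBm : 0 < B*m := mul_pos hBpos (by omega)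
      have hNpos : 1 ≤ N := by rw [hN]; linarith
      refine ⟨N.toNat, by omega, ?_⟩
      have hcast : ((N.toNat : ℕ) : ℤ) = N := Int.toNat_of_nonneg (by linarith)
      rw [keyf N.toNat, hcast]
      set qv : ℤ := S*B^2*m + S*B*r - B*m + m - r with hqv
      have hq : (P*N)/B = qv := by
        refine div_eq_of B _ qv r hBpos ?_ hr0 (by omega)
        rw [hPdef, hN, hqv]; ring
      set Qv : ℤ := S*B*qv - qv + S*B*m + S*r - m with hQv
      have hQ : P*qv = B*Qv + (B-1) := by
        rw [hPdef, hQv, hqv, hm]; ring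
      have hnum : P^2*N = B^2*(Qv + S*r) + ((B-1)*(B - r)) := by
        rw [hPdef, hN, hQv, hqv, hm]; ring
      have h1 : (P^2*N)/(B^2) = Qv + S*r :=
        div_eq_of (B^2) _ _ _ hB2pos hnum
          (mul_nonneg (by omega) (by omega))
          (by
            have h' : (B-1)*(B-r) ≤ (B-1)*B := mul_le_mul_of_nonneg_left (by omega) (by omega)
            have h'' : (B-1)*B = B^2 - B := by ring
            linarith)
      have h2 : (P*((P*N)/B))/B = Qv := by
        rw [hq]
        exact div_eq_of B _ _ (B-1) hBpos hQ (by omega) (by omega)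
      rw [h1, h2]; ring
    · -- w = S * r - 1 ; witness n = B*r + r
      set N : ℤ := B*r + r with hN
      have hBr : 0 ≤ B*r := mul_nonneg (by omega) (by omega)
      have hNpos : 1 ≤ N := by rw [hN]; linarith
      refine ⟨N.toNat, by omega, ?_⟩
      have hcast : ((N.toNat : ℕ) : ℤ) = N := Int.toNat_of_nonneg (by linarith)
      rw [keyf N.toNat, hcast]
      set qv : ℤ := S*B^2*r + S*B*r - B*r with hqv
      have hq : (P*N)/B = qv := by
        refine div_eq_of B _ qv r hBpos ?_ (by omega) (by omega)
        rw [hPdef, hN, hqv]; ring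
      set Qv : ℤ := S*B*qv - qv + S*B*r + S*r - r with hQv
      have hQ : P*qv = B*Qv + 0 := by
        rw [hPdef, hQv, hqv]; ring
      have hnum : P^2*N = B^2*(Qv + S*r - 1) + (B^2 - (B-1)*r) := by
        rw [hPdef, hN, hQv, hqv]; ring
      have h1 : (P^2*N)/(B^2) = Qv + S*r - 1 :=
        div_eq_of (B^2) _ _ _ hB2pos hnum
          (by
            have h' : (B-1)*r ≤ (B-1)*(B-1) := mul_le_mul_of_nonneg_left (by omega) (by omega)
            have h'' : (B-1)*(B-1) = B^2 - 2*B + 1 := by ring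
            linarith)
          (by
            have h' : 0 < (B-1)*r := mul_pos (by omega) (by omega)
            linarith)
      have h2 : (P*((P*N)/B))/B = Qv := by
        rw [hq]
        exact div_eq_of B _ _ 0 hBpos hQ le_rfl hBpos
      rw [h1, h2]; ring
end

section
/- Let s ∈ ℕ be a positive integer. Then: (i) Range(f_{3s+1/3}) = {0, s, 2s}; (ii) Range(f_{3s+2/3}) = {0, s, 2s, 2s+1}; (iii) Range(f_{3s−2+1/3}) = {0, s−1, s, 2s−2, 2s−1}; (iv) Range(f_{3s−2+2/3}) = {0, s−1, s, 2s−1}; (v) Range(f_{3s−1+1/3}) = {0, s−1, s, 2s−1, 2s}; (vi) Range(f_{3s−1+2/3}) = {0, s−1, s, 2s−1, 2s}. -/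
def g (a r : ℤ) : ℤ := a ^ 2 * r / 9 - a * (a * r / 3) / 3

lemma fdiv3 (m : ℤ) : ⌊(m : ℝ) / 3⌋ = m / 3 := by
  rw [show (m : ℝ) / 3 = (((m : ℚ) / ((3 : ℕ) : ℚ) : ℚ) : ℝ) by push_cast; ring,
    Rat.floor_cast, Rat.floor_intCast_div_natCast]
  norm_num

lemma fdiv9 (m : ℤ) : ⌊(m : ℝ) / 9⌋ = m / 9 := by
  rw [show (m : ℝ) / 9 = (((m : ℚ) / ((9 : ℕ) : ℚ) : ℚ) : ℝ) by push_cast; ring,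
    Rat.floor_cast, Rat.floor_intCast_div_natCast]
  norm_num

lemma f_eq_g (a : ℤ) (n : ℕ) : f ((a : ℝ) / 3) n = g a ((n : ℤ) % 9) := by
  have h1 : ((a : ℝ) / 3) * n = ((a * n : ℤ) : ℝ) / 3 := by push_cast; ring
  have h2 : ((a : ℝ) / 3) ^ 2 * n = ((a ^ 2 * n : ℤ) : ℝ) / 9 := by
    push_cast; ring
  rw [f, h1, h2, fdiv3, fdiv9]
  have h3 : ((a : ℝ) / 3) * ((a * n / (3:ℤ) : ℤ) : ℝ)
      = ((a * (a * n / 3) : ℤ) : ℝ) / 3 := by push_cast; ring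
  rw [h3, fdiv3]
  -- now a pure integer statement
  obtain ⟨q, r, hn, hr0, hr9⟩ : ∃ q r : ℤ, (n : ℤ) = 9 * q + r ∧ 0 ≤ r ∧ r < 9 :=
    ⟨(n : ℤ) / 9, (n : ℤ) % 9, by omega, by omega, by omega⟩
  have hrn : (n : ℤ) % 9 = r := by omega
  rw [hrn, g]
  have e1 : a ^ 2 * (n : ℤ) = a ^ 2 * r + a ^ 2 * q * 9 := by rw [hn]; ring
  have e2 : a * (n : ℤ) = a * r + 3 * a * q * 3 := by rw [hn]; ring
  rw [e1, e2, Int.add_mul_ediv_right _ _ (by norm_num : (9:ℤ) ≠ 0),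
    Int.add_mul_ediv_right _ _ (by norm_num : (3:ℤ) ≠ 0)]
  have e3 : a * (a * r / 3 + 3 * a * q) = a * (a * r / 3) + a ^ 2 * q * 3 := by ring
  rw [e3, Int.add_mul_ediv_right _ _ (by norm_num : (3:ℤ) ≠ 0)]
  ring

lemma g_eq (a r e : ℤ) (he : a ^ 2 % 9 = e) :
    ∃ A w d : ℤ, A % 9 = e ∧ d = a * r % 3 ∧
      (d = 0 → 3 * w = A * r) ∧ (d = 1 → 3 * w = A * r - a) ∧
      (d = 2 → 3 * w = A * r - 2 * a) ∧ g a r = A * r / 9 - w / 3 := by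
  refine ⟨a ^ 2, a * (a * r / 3), a * r % 3, he, rfl, ?_, ?_, ?_, rfl⟩ <;>
    · intro hd
      have h := Int.mul_ediv_add_emod (a * r) 3
      linear_combination a * h - a * hd

lemma sq_mod9 (a c : ℤ) (h : a % 9 = c) : a ^ 2 % 9 = c ^ 2 % 9 := by
  rw [pow_two, Int.mul_emod, h, pow_two]


lemma fwd (a e : ℤ) (P : ℤ → Prop) (he : a ^ 2 % 9 = e)
    (H : ∀ r A w d : ℤ, 0 ≤ r → r < 9 → A % 9 = e → d = a * r % 3 →
      (d = 0 → 3 * w = A * r) → (d = 1 → 3 * w = A * r - a) →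
      (d = 2 → 3 * w = A * r - 2 * a) → P (A * r / 9 - w / 3)) :
    ∀ n : ℕ, P (f ((a : ℝ) / 3) n) := by
  intro n
  rw [f_eq_g]
  obtain ⟨A, w, d, hA, hd, h0, h1, h2, hg⟩ := g_eq a ((n : ℤ) % 9) e he
  rw [hg]
  exact H _ A w d (by omega) (by omega) hA hd h0 h1 h2

lemma wit (a e v r : ℤ) (n : ℕ) (hn : 1 ≤ n) (hr : (n : ℤ) % 9 = r)
    (he : a ^ 2 % 9 = e)
    (H : ∀ A w d : ℤ, A % 9 = e → d = a * r % 3 → (d = 0 → 3 * w = A * r) →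
      (d = 1 → 3 * w = A * r - a) → (d = 2 → 3 * w = A * r - 2 * a) →
      A * r / 9 - w / 3 = v) :
    ∃ m : ℕ, 1 ≤ m ∧ f ((a : ℝ) / 3) m = v := by
  obtain ⟨A, w, d, hA, hd, h0, h1, h2, hg⟩ := g_eq a r e he
  exact ⟨n, hn, by rw [f_eq_g, hr, hg]; exact H A w d hA hd h0 h1 h2⟩

theorem stmt14 (s : ℕ) (hs : 1 ≤ s) :
    Range (3 * (s : ℝ) + 1 / 3) = {0, (s : ℤ), 2 * (s : ℤ)} ∧
    Range (3 * (s : ℝ) + 2 / 3) = {0, (s : ℤ), 2 * (s : ℤ), 2 * (s : ℤ) + 1} ∧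
    Range (3 * (s : ℝ) - 2 + 1 / 3) =
      {0, (s : ℤ) - 1, (s : ℤ), 2 * (s : ℤ) - 2, 2 * (s : ℤ) - 1} ∧
    Range (3 * (s : ℝ) - 2 + 2 / 3) = {0, (s : ℤ) - 1, (s : ℤ), 2 * (s : ℤ) - 1} ∧
    Range (3 * (s : ℝ) - 1 + 1 / 3) =
      {0, (s : ℤ) - 1, (s : ℤ), 2 * (s : ℤ) - 1, 2 * (s : ℤ)} ∧
    Range (3 * (s : ℝ) - 1 + 2 / 3) =
      {0, (s : ℤ) - 1, (s : ℤ), 2 * (s : ℤ) - 1, 2 * (s : ℤ)} := by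
  refine ⟨?_, ?_, ?_, ?_, ?_, ?_⟩
  · rw [show 3 * (s : ℝ) + 1 / 3 = ((9 * (s : ℤ) + 1 : ℤ) : ℝ) / 3 by push_cast; ring]
    have he : (9 * (s : ℤ) + 1) ^ 2 % 9 = 1 := by rw [sq_mod9 _ 1 (by omega)]; decide
    ext v
    simp only [Range, Set.mem_setOf_eq, Set.mem_insert_iff, Set.mem_singleton_iff]
    constructor
    · rintro ⟨n, hn, rfl⟩
      refine fwd _ 1 (fun x => x = 0 ∨ x = (s : ℤ) ∨ x = 2 * (s : ℤ)) he ?_ n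
      intro r A w d hr0 hr9 hA hd h0 h1 h2
      interval_cases r <;> omega
    · rintro (rfl | rfl | rfl)
      · exact wit _ _ _ 3 3 (by norm_num) (by norm_num) he
          (by intro A w d hA hd h0 h1 h2; omega)
      · exact wit _ _ _ 1 1 (by norm_num) (by norm_num) he
          (by intro A w d hA hd h0 h1 h2; omega)
      · exact wit _ _ _ 2 2 (by norm_num) (by norm_num) he
          (by intro A w d hA hd h0 h1 h2; omega)
  · rw [show 3 * (s : ℝ) + 2 / 3 = ((9 * (s : ℤ) + 2 : ℤ) : ℝ) / 3 by push_cast; ring]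
    have he : (9 * (s : ℤ) + 2) ^ 2 % 9 = 4 := by rw [sq_mod9 _ 2 (by omega)]; decide
    ext v
    simp only [Range, Set.mem_setOf_eq, Set.mem_insert_iff, Set.mem_singleton_iff]
    constructor
    · rintro ⟨n, hn, rfl⟩
      refine fwd _ 4 (fun x => x = 0 ∨ x = (s : ℤ) ∨ x = 2 * (s : ℤ) ∨ x = 2 * (s : ℤ) + 1) he ?_ n
      intro r A w d hr0 hr9 hA hd h0 h1 h2
      interval_cases r <;> omega
    · rintro (rfl | rfl | rfl | rfl)
      · exact wit _ _ _ 3 3 (by norm_num) (by norm_num) he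
          (by intro A w d hA hd h0 h1 h2; omega)
      · exact wit _ _ _ 2 2 (by norm_num) (by norm_num) he
          (by intro A w d hA hd h0 h1 h2; omega)
      · exact wit _ _ _ 1 1 (by norm_num) (by norm_num) he
          (by intro A w d hA hd h0 h1 h2; omega)
      · exact wit _ _ _ 7 7 (by norm_num) (by norm_num) he
          (by intro A w d hA hd h0 h1 h2; omega)
  · rw [show 3 * (s : ℝ) - 2 + 1 / 3 = ((9 * (s : ℤ) - 5 : ℤ) : ℝ) / 3 by push_cast; ring]
    have he : (9 * (s : ℤ) - 5) ^ 2 % 9 = 7 := by rw [sq_mod9 _ 4 (by omega)]; decide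
    ext v
    simp only [Range, Set.mem_setOf_eq, Set.mem_insert_iff, Set.mem_singleton_iff]
    constructor
    · rintro ⟨n, hn, rfl⟩
      refine fwd _ 7 (fun x => x = 0 ∨ x = (s : ℤ) - 1 ∨ x = (s : ℤ) ∨ x = 2 * (s : ℤ) - 2 ∨ x = 2 * (s : ℤ) - 1) he ?_ n
      intro r A w d hr0 hr9 hA hd h0 h1 h2
      interval_cases r <;> omega
    · rintro (rfl | rfl | rfl | rfl | rfl)
      · exact wit _ _ _ 3 3 (by norm_num) (by norm_num) he
          (by intro A w d hA hd h0 h1 h2; omega)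
      · exact wit _ _ _ 1 1 (by norm_num) (by norm_num) he
          (by intro A w d hA hd h0 h1 h2; omega)
      · exact wit _ _ _ 4 4 (by norm_num) (by norm_num) he
          (by intro A w d hA hd h0 h1 h2; omega)
      · exact wit _ _ _ 5 5 (by norm_num) (by norm_num) he
          (by intro A w d hA hd h0 h1 h2; omega)
      · exact wit _ _ _ 2 2 (by norm_num) (by norm_num) he
          (by intro A w d hA hd h0 h1 h2; omega)
  · rw [show 3 * (s : ℝ) - 2 + 2 / 3 = ((9 * (s : ℤ) - 4 : ℤ) : ℝ) / 3 by push_cast; ring]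
    have he : (9 * (s : ℤ) - 4) ^ 2 % 9 = 7 := by rw [sq_mod9 _ 5 (by omega)]; decide
    ext v
    simp only [Range, Set.mem_setOf_eq, Set.mem_insert_iff, Set.mem_singleton_iff]
    constructor
    · rintro ⟨n, hn, rfl⟩
      refine fwd _ 7 (fun x => x = 0 ∨ x = (s : ℤ) - 1 ∨ x = (s : ℤ) ∨ x = 2 * (s : ℤ) - 1) he ?_ n
      intro r A w d hr0 hr9 hA hd h0 h1 h2
      interval_cases r <;> omega
    · rintro (rfl | rfl | rfl | rfl)
      · exact wit _ _ _ 3 3 (by norm_num) (by norm_num) he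
          (by intro A w d hA hd h0 h1 h2; omega)
      · exact wit _ _ _ 2 2 (by norm_num) (by norm_num) he
          (by intro A w d hA hd h0 h1 h2; omega)
      · exact wit _ _ _ 8 8 (by norm_num) (by norm_num) he
          (by intro A w d hA hd h0 h1 h2; omega)
      · exact wit _ _ _ 1 1 (by norm_num) (by norm_num) he
          (by intro A w d hA hd h0 h1 h2; omega)
  · rw [show 3 * (s : ℝ) - 1 + 1 / 3 = ((9 * (s : ℤ) - 2 : ℤ) : ℝ) / 3 by push_cast; ring]
    have he : (9 * (s : ℤ) - 2) ^ 2 % 9 = 4 := by rw [sq_mod9 _ 7 (by omega)]; decide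
    ext v
    simp only [Range, Set.mem_setOf_eq, Set.mem_insert_iff, Set.mem_singleton_iff]
    constructor
    · rintro ⟨n, hn, rfl⟩
      refine fwd _ 4 (fun x => x = 0 ∨ x = (s : ℤ) - 1 ∨ x = (s : ℤ) ∨ x = 2 * (s : ℤ) - 1 ∨ x = 2 * (s : ℤ)) he ?_ n
      intro r A w d hr0 hr9 hA hd h0 h1 h2
      interval_cases r <;> omega
    · rintro (rfl | rfl | rfl | rfl | rfl)
      · exact wit _ _ _ 3 3 (by norm_num) (by norm_num) he
          (by intro A w d hA hd h0 h1 h2; omega)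
      · exact wit _ _ _ 4 4 (by norm_num) (by norm_num) he
          (by intro A w d hA hd h0 h1 h2; omega)
      · exact wit _ _ _ 1 1 (by norm_num) (by norm_num) he
          (by intro A w d hA hd h0 h1 h2; omega)
      · exact wit _ _ _ 2 2 (by norm_num) (by norm_num) he
          (by intro A w d hA hd h0 h1 h2; omega)
      · exact wit _ _ _ 5 5 (by norm_num) (by norm_num) he
          (by intro A w d hA hd h0 h1 h2; omega)
  · rw [show 3 * (s : ℝ) - 1 + 2 / 3 = ((9 * (s : ℤ) - 1 : ℤ) : ℝ) / 3 by push_cast; ring]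
    have he : (9 * (s : ℤ) - 1) ^ 2 % 9 = 1 := by rw [sq_mod9 _ 8 (by omega)]; decide
    ext v
    simp only [Range, Set.mem_setOf_eq, Set.mem_insert_iff, Set.mem_singleton_iff]
    constructor
    · rintro ⟨n, hn, rfl⟩
      refine fwd _ 1 (fun x => x = 0 ∨ x = (s : ℤ) - 1 ∨ x = (s : ℤ) ∨ x = 2 * (s : ℤ) - 1 ∨ x = 2 * (s : ℤ)) he ?_ n
      intro r A w d hr0 hr9 hA hd h0 h1 h2
      interval_cases r <;> omega
    · rintro (rfl | rfl | rfl | rfl | rfl)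
      · exact wit _ _ _ 3 3 (by norm_num) (by norm_num) he
          (by intro A w d hA hd h0 h1 h2; omega)
      · exact wit _ _ _ 8 8 (by norm_num) (by norm_num) he
          (by intro A w d hA hd h0 h1 h2; omega)
      · exact wit _ _ _ 2 2 (by norm_num) (by norm_num) he
          (by intro A w d hA hd h0 h1 h2; omega)
      · exact wit _ _ _ 7 7 (by norm_num) (by norm_num) he
          (by intro A w d hA hd h0 h1 h2; omega)
      · exact wit _ _ _ 1 1 (by norm_num) (by norm_num) he
          (by intro A w d hA hd h0 h1 h2; omega)
end

section
/- Let t ∈ ℕ be a positive integer such that t is not of the form (s−1)s for any s ∈ ℕ, and let α(t) = (1 + √(1 + 4t))/2 (which is irrational and greater than 1). Then Range(f_{α(t)}) = ⟦1, ⌊α(t)⌋⟧ = {m ∈ ℤ : 1 ≤ m ≤ ⌊α(t)⌋}. -/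
/-- The generalized golden ratio `α(t) = (1 + √(1 + 4t))/2`. -/
noncomputable def alphaT (t : ℕ) : ℝ := (1 + Real.sqrt (1 + 4 * (t : ℝ))) / 2

/-- Density of fractional parts of positive natural multiples of an irrational. -/
lemma dense_fract_nat {α : ℝ} (hirr : Irrational α) {u v : ℝ} (hu : 0 < u) (huv : u < v)
    (hv : v < 1) : ∃ n : ℕ, 1 ≤ n ∧ u < Int.fract (α * n) ∧ Int.fract (α * n) < v := by
  obtain ⟨N, hN⟩ := exists_nat_gt (1 / (v - u))
  have hvu : 0 < v - u := by linarith
  have hN0 : 0 < N := by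
    by_contra h
    have : N = 0 := by omega
    rw [this] at hN
    simp at hN
    have : 0 < 1 / (v - u) := by positivity
    linarith
  obtain ⟨j, k, hk0, hkN, hjk⟩ := Real.exists_int_int_abs_mul_sub_le α hN0
  set δ : ℝ := (k : ℝ) * α - (j : ℝ) with hδdef
  have hδne : δ ≠ 0 := by
    intro h
    have hk0' : (k : ℤ) ≠ 0 := ne_of_gt hk0
    have hi : Irrational ((k : ℝ) * α) := hirr.intCast_mul hk0'
    have : (k : ℝ) * α = (j : ℝ) := by
      have := sub_eq_zero.mp h
      exact this
    exact hi.ne_int j this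
  have hδlt : |δ| < v - u := by
    have h1 : (1 : ℝ) / (N + 1) < v - u := by
      rw [div_lt_iff₀ (by positivity)]
      have h2 : 1 < (N : ℝ) * (v - u) := by
        rw [div_lt_iff₀ hvu] at hN
        linarith
      nlinarith [h2, hvu]
    linarith [hjk]
  have haux : ∀ M : ℤ, 1 ≤ M →
      α * (((M * k).toNat : ℕ) : ℝ) = ((M * j : ℤ) : ℝ) + (M : ℝ) * δ := by
    intro M hM
    have hMk : (0 : ℤ) ≤ M * k := by positivity
    have hcast : (((M * k).toNat : ℕ) : ℝ) = (M : ℝ) * (k : ℝ) := by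
      have : (((M * k).toNat : ℤ) : ℝ) = ((M * k : ℤ) : ℝ) := by
        rw [Int.toNat_of_nonneg hMk]
      push_cast at this ⊢
      linarith
    rw [hcast, hδdef]
    push_cast
    ring
  have hn1 : ∀ M : ℤ, 1 ≤ M → 1 ≤ (M * k).toNat := by
    intro M hM
    have : (1 : ℤ) ≤ M * k := by nlinarith
    omega
  rcases lt_or_gt_of_ne hδne with hneg | hpos
  · -- δ < 0
    set ε : ℝ := -δ with hεdef
    have hε0 : 0 < ε := by simp [hεdef]; linarith
    have hεlt : ε < v - u := by
      have : |δ| = ε := by rw [abs_of_neg hneg]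
      linarith [hδlt]
    set M : ℤ := ⌊(1 - v) / ε⌋ + 1 with hMdef
    have hM1 : 1 ≤ M := by
      have : 0 ≤ ⌊(1 - v) / ε⌋ := Int.floor_nonneg.mpr (div_nonneg (by linarith) hε0.le)
      omega
    have hlow : 1 - v < (M : ℝ) * ε := by
      have h := Int.lt_floor_add_one ((1 - v) / ε)
      rw [div_lt_iff₀ hε0] at h
      calc 1 - v < (⌊(1 - v) / ε⌋ + 1 : ℝ) * ε := h
        _ = (M : ℝ) * ε := by rw [hMdef]; push_cast; ring
    have hhigh : (M : ℝ) * ε < 1 - u := by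
      have h := Int.floor_le ((1 - v) / ε)
      have : ((M : ℝ) - 1) * ε ≤ 1 - v := by
        rw [hMdef]
        push_cast
        calc (⌊(1 - v) / ε⌋ + 1 - 1 : ℝ) * ε = (⌊(1 - v) / ε⌋ : ℝ) * ε := by ring
          _ ≤ ((1 - v) / ε) * ε := by nlinarith
          _ = 1 - v := by field_simp
      nlinarith
    have hMε0 : 0 < (M : ℝ) * ε := by
      have : (1 : ℝ) ≤ (M : ℝ) := by exact_mod_cast hM1
      nlinarith
    have hMε1 : (M : ℝ) * ε < 1 := by linarith
    refine ⟨(M * k).toNat, hn1 M hM1, ?_⟩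
    have heq : α * (((M * k).toNat : ℕ) : ℝ) = ((M * j : ℤ) : ℝ) + (-((M : ℝ) * ε)) := by
      rw [haux M hM1, hεdef]; ring
    rw [heq, Int.fract_intCast_add]
    have hfr : Int.fract ((M : ℝ) * ε) = (M : ℝ) * ε :=
      Int.fract_eq_self.mpr ⟨le_of_lt hMε0, hMε1⟩
    have hne : Int.fract ((M : ℝ) * ε) ≠ 0 := by rw [hfr]; exact ne_of_gt hMε0
    rw [Int.fract_neg hne, hfr]
    constructor <;> linarith
  · -- δ > 0
    have hδlt' : δ < v - u := by
      have : |δ| = δ := abs_of_pos hpos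
      linarith [hδlt]
    set M : ℤ := ⌊u / δ⌋ + 1 with hMdef
    have hM1 : 1 ≤ M := by
      have : 0 ≤ ⌊u / δ⌋ := Int.floor_nonneg.mpr (by positivity)
      omega
    have hlow : u < (M : ℝ) * δ := by
      have h := Int.lt_floor_add_one (u / δ)
      rw [div_lt_iff₀ hpos] at h
      calc u < (⌊u / δ⌋ + 1 : ℝ) * δ := h
        _ = (M : ℝ) * δ := by rw [hMdef]; push_cast; ring
    have hhigh : (M : ℝ) * δ < v := by
      have h := Int.floor_le (u / δ)
      have : ((M : ℝ) - 1) * δ ≤ u := by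
        rw [hMdef]
        push_cast
        calc (⌊u / δ⌋ + 1 - 1 : ℝ) * δ = (⌊u / δ⌋ : ℝ) * δ := by ring
          _ ≤ (u / δ) * δ := by nlinarith
          _ = u := by field_simp
      nlinarith
    refine ⟨(M * k).toNat, hn1 M hM1, ?_⟩
    rw [haux M hM1, Int.fract_intCast_add]
    have hfr : Int.fract ((M : ℝ) * δ) = (M : ℝ) * δ :=
      Int.fract_eq_self.mpr ⟨by linarith, by linarith⟩
    rw [hfr]
    exact ⟨hlow, hhigh⟩

theorem stmt15 (t : ℕ) (ht : 1 ≤ t) (hnf : ∀ s : ℕ, 1 ≤ s → t ≠ (s - 1) * s) :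
    Range (alphaT t) = {m : ℤ | 1 ≤ m ∧ m ≤ ⌊alphaT t⌋} := by
  set α := alphaT t with hα
  -- 1 + 4t is not a perfect square
  have hns : ¬ IsSquare (1 + 4 * t) := by
    rintro ⟨r, hr⟩
    rcases Nat.even_or_odd r with ⟨a, ha⟩ | ⟨s, hs⟩
    · have : 1 + 4 * t = 4 * (a * a) := by rw [hr, ha]; ring
      omega
    · have h4 : 1 + 4 * t = 4 * (s * s) + 4 * s + 1 := by rw [hr, hs]; ring
      have hts : t = s * s + s := by omega
      have := hnf (s + 1) (by omega)
      apply this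
      simp only [Nat.add_sub_cancel]
      rw [hts]; ring
  -- irrationality
  have hsqirr : Irrational (Real.sqrt (1 + 4 * (t : ℝ))) := by
    have hc : ((1 + 4 * t : ℕ) : ℝ) = 1 + 4 * (t : ℝ) := by push_cast; ring
    rw [← hc]
    exact irrational_sqrt_natCast_iff.mpr hns
  have hirr : Irrational α := by
    rw [hα, alphaT]
    have h1 : Irrational ((1 : ℕ) + Real.sqrt (1 + 4 * (t : ℝ))) := hsqirr.natCast_add 1
    have h2 : Irrational (((1 : ℕ) + Real.sqrt (1 + 4 * (t : ℝ))) / ((2 : ℕ) : ℝ)) :=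
      h1.div_natCast two_ne_zero
    simpa using h2
  -- α > 1
  have hsq1 : (1 : ℝ) < Real.sqrt (1 + 4 * (t : ℝ)) := by
    have h1 : (1 : ℝ) ≤ (t : ℝ) := by exact_mod_cast ht
    have : (1 : ℝ) < 1 + 4 * (t : ℝ) := by linarith
    nlinarith [Real.sq_sqrt (show (0:ℝ) ≤ 1 + 4 * (t:ℝ) by linarith),
      Real.sqrt_nonneg (1 + 4 * (t : ℝ))]
  have hα1 : 1 < α := by rw [hα, alphaT]; linarith
  have hαm1 : 0 < α - 1 := by linarith
  -- the quadratic equation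
  have hα2 : α ^ 2 = α + t := by
    have hs : Real.sqrt (1 + 4 * (t : ℝ)) ^ 2 = 1 + 4 * (t : ℝ) :=
      Real.sq_sqrt (by positivity)
    rw [hα, alphaT]
    linear_combination hs / 4
  have hfl1 : 1 ≤ ⌊α⌋ := Int.le_floor.mpr (by exact_mod_cast hα1.le)
  have hflα : (⌊α⌋ : ℝ) < α := lt_of_le_of_ne (Int.floor_le α) (Ne.symm (hirr.ne_int ⌊α⌋))
  -- the key identity
  have key : ∀ n : ℕ, 1 ≤ n → f α n = ⌈(α - 1) * Int.fract (α * n)⌉ := by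
    intro n hn
    set m := ⌊α * (n : ℝ)⌋ with hm
    set θ := Int.fract (α * (n : ℝ)) with hθdef
    have hθ : α * (n : ℝ) = (m : ℝ) + θ := by rw [hm, hθdef]; exact (Int.floor_add_fract _).symm
    have h1 : α ^ 2 * (n : ℝ) = α * n + ((t * n : ℕ) : ℝ) := by
      rw [hα2]; push_cast; ring
    have e1 : ⌊α ^ 2 * (n : ℝ)⌋ = m + (t * n : ℕ) := by
      rw [h1, Int.floor_add_natCast, hm]
    have h2 : α * (m : ℝ) = -((α - 1) * θ) + ((m + (t * n : ℕ) : ℤ) : ℝ) := by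
      push_cast
      linear_combination (n : ℝ) * hα2 - (α - 1) * hθ
    have e2 : ⌊α * (m : ℝ)⌋ = ⌊-((α - 1) * θ)⌋ + (m + (t * n : ℕ)) := by
      rw [h2, Int.floor_add_intCast]
    show (⌊α ^ 2 * (n : ℝ)⌋ - ⌊α * ((m : ℤ) : ℝ)⌋ : ℤ) = _
    rw [e1, e2, Int.floor_neg]
    ring
  -- fract facts
  have hθface : ∀ n : ℕ, 1 ≤ n → 0 < Int.fract (α * (n : ℝ)) ∧ Int.fract (α * (n : ℝ)) < 1 := by
    intro n hn
    have hn0 : n ≠ 0 := by omega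
    have hi : Irrational (α * (n : ℝ)) := hirr.mul_natCast hn0
    exact ⟨Int.fract_pos.mpr (hi.ne_int _), Int.fract_lt_one _⟩
  ext v
  simp only [Range, Set.mem_setOf_eq]
  constructor
  · rintro ⟨n, hn, rfl⟩
    rw [key n hn]
    obtain ⟨hθ0, hθ1⟩ := hθface n hn
    set θ := Int.fract (α * (n : ℝ))
    constructor
    · have : (0 : ℤ) < ⌈(α - 1) * θ⌉ := by
        rw [Int.lt_ceil]
        push_cast
        nlinarith
      omega
    · rw [Int.ceil_le]
      have h1 : (α - 1) * θ < α - 1 := by nlinarith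
      have h2 : α - 1 < (⌊α⌋ : ℝ) := by
        have := Int.lt_floor_add_one α
        linarith
      linarith
  · rintro ⟨hv1, hv2⟩
    have hk1 : (1 : ℝ) ≤ (v : ℝ) := by exact_mod_cast hv1
    have hkα : (v : ℝ) < α := by
      have : (v : ℝ) ≤ (⌊α⌋ : ℝ) := by exact_mod_cast hv2
      linarith
    set u0 : ℝ := ((v : ℝ) - 1) / (α - 1) with hu0def
    set v0 : ℝ := min ((v : ℝ) / (α - 1)) 1 with hv0def
    have hu00 : 0 ≤ u0 := by
      apply div_nonneg _ hαm1.le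
      linarith
    have hu0v0 : u0 < v0 := by
      apply lt_min
      · rw [hu0def, div_lt_div_iff₀ hαm1 hαm1]
        nlinarith
      · rw [hu0def, div_lt_one hαm1]
        linarith
    set w : ℝ := v0 - u0 with hwdef
    have hw0 : 0 < w := by rw [hwdef]; linarith
    have hv01 : v0 ≤ 1 := min_le_right _ _
    have hu : 0 < u0 + w / 4 := by linarith
    have huv : u0 + w / 4 < v0 - w / 4 := by linarith
    have hvlt : v0 - w / 4 < 1 := by linarith
    obtain ⟨n, hn, hfu, hfv⟩ := dense_fract_nat hirr hu huv hvlt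
    refine ⟨n, hn, ?_⟩
    rw [key n hn]
    set θ := Int.fract (α * (n : ℝ)) with hθdef
    have hθu0 : u0 < θ := by linarith
    have hθv0 : θ < v0 := by linarith
    rw [Int.ceil_eq_iff]
    constructor
    · have h := (div_lt_iff₀ hαm1).mp hθu0
      push_cast
      linarith
    · have hθv : θ < (v : ℝ) / (α - 1) := lt_of_lt_of_le hθv0 (min_le_left _ _)
      have h := (lt_div_iff₀ hαm1).mp hθv
      linarith
end

section
/- Let p ∈ ℕ and t ∈ ℕ be positive integers such that t is not of the form (s−1)s for any s ∈ ℕ, and let α(t) = (1 + √(1 + 4t))/2. Then Range(f_{p·α(t)}) ⊆ ⟦1, ⌊p·α(t)⌋⟧; more precisely, for every positive integer n, (p·α(t) − p)·⟨p·α(t)·n⟩ < f_{p·α(t)}(n) < p + (p·α(t) − p)·⟨p·α(t)·n⟩, where ⟨x⟩ = x − ⌊x⌋. -/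
theorem stmt16 (p t : ℕ) (hp : 1 ≤ p) (ht : 1 ≤ t)
    (hnf : ∀ s : ℕ, 1 ≤ s → t ≠ (s - 1) * s) :
    Range ((p : ℝ) * alphaT t) ⊆ {m : ℤ | 1 ≤ m ∧ m ≤ ⌊(p : ℝ) * alphaT t⌋} ∧
    ∀ n : ℕ, 1 ≤ n →
      ((p : ℝ) * alphaT t - (p : ℝ)) * Int.fract ((p : ℝ) * alphaT t * (n : ℝ)) <
          (f ((p : ℝ) * alphaT t) n : ℝ) ∧
      (f ((p : ℝ) * alphaT t) n : ℝ) <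
          (p : ℝ) + ((p : ℝ) * alphaT t - (p : ℝ)) * Int.fract ((p : ℝ) * alphaT t * (n : ℝ)) := by
  have hsq : ¬ IsSquare (1 + 4 * t) := by
    rintro ⟨k, hk⟩
    have hkk : Odd (k * k) := hk ▸ ⟨2 * t, by ring⟩
    have hkodd : Odd k := (Nat.odd_mul.mp hkk).1
    obtain ⟨s, hs⟩ := hkodd
    have htval : t = s * (s + 1) := by nlinarith [hk, hs]
    exact hnf (s + 1) (by omega) (by simpa using htval)
  have hsirr : Irrational (Real.sqrt ((1 + 4 * t : ℕ) : ℝ)) :=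
    irrational_sqrt_natCast_iff.mpr hsq
  have hcast : ((1 + 4 * t : ℕ) : ℝ) = 1 + 4 * (t : ℝ) := by push_cast; ring
  have hs2 : Real.sqrt (1 + 4 * (t : ℝ)) ^ 2 = 1 + 4 * (t : ℝ) :=
    Real.sq_sqrt (by positivity)
  have hs0 : 0 ≤ Real.sqrt (1 + 4 * (t : ℝ)) := Real.sqrt_nonneg _
  set α : ℝ := alphaT t with hαdef
  have hα2 : α ^ 2 = α + t := by
    rw [hαdef]; unfold alphaT; nlinarith [hs2]
  have hα1 : 1 < α := by
    rw [hαdef]; unfold alphaT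
    nlinarith [hs2, hs0, (by exact_mod_cast ht : (1:ℝ) ≤ (t:ℝ))]
  have hirr : Irrational α := by
    rw [hαdef]; unfold alphaT
    rw [hcast] at hsirr
    have h1 : Irrational (((1:ℤ) : ℝ) + Real.sqrt (1 + 4 * (t : ℝ))) := hsirr.intCast_add 1
    have h2 := h1.div_natCast (m := 2) (by norm_num)
    simpa using h2
  have hp1 : (1 : ℝ) ≤ (p : ℝ) := by exact_mod_cast hp
  have hβp : (0 : ℝ) < (p : ℝ) * α - p := by nlinarith
  -- main per-n bounds
  have key : ∀ n : ℕ, 1 ≤ n →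
      ((p : ℝ) * α - (p : ℝ)) * Int.fract ((p : ℝ) * α * (n : ℝ)) < (f ((p : ℝ) * α) n : ℝ) ∧
      (f ((p : ℝ) * α) n : ℝ) <
        (p : ℝ) + ((p : ℝ) * α - (p : ℝ)) * Int.fract ((p : ℝ) * α * (n : ℝ)) := by
    intro n hn
    have hβn : (p : ℝ) * α * (n : ℝ) =
        ((⌊(p : ℝ) * α * (n : ℝ)⌋ : ℤ) : ℝ) + Int.fract ((p : ℝ) * α * (n : ℝ)) :=
      (Int.floor_add_fract _).symm
    set m : ℤ := ⌊(p : ℝ) * α * (n : ℝ)⌋ with hm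
    set θ : ℝ := Int.fract ((p : ℝ) * α * (n : ℝ)) with hθ
    have hθ0 : 0 ≤ θ := Int.fract_nonneg _
    have hθ1 : θ < 1 := Int.fract_lt_one _
    have hn1 : (1 : ℝ) ≤ (n : ℝ) := by exact_mod_cast hn
    have hm1 : 1 ≤ m := by
      rw [hm, Int.le_floor]
      push_cast
      nlinarith
    have hfloor1 : ⌊((p : ℝ) * α) ^ 2 * (n : ℝ)⌋ = (p ^ 2 * t * n + p * m : ℤ) + ⌊(p : ℝ) * θ⌋ := by
      have he : ((p : ℝ) * α) ^ 2 * (n : ℝ) = ((p ^ 2 * t * n + p * m : ℤ) : ℝ) + (p : ℝ) * θ := by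
        push_cast
        linear_combination ((p : ℝ) ^ 2 * n) * hα2 + (p : ℝ) * hβn
      rw [he, Int.floor_intCast_add]
    have hfloor2 : ⌊((p : ℝ) * α) * (m : ℝ)⌋ =
        (p ^ 2 * t * n + p * m : ℤ) - ⌈((p : ℝ) * α - p) * θ⌉ := by
      have he : ((p : ℝ) * α) * (m : ℝ) =
          ((p ^ 2 * t * n + p * m : ℤ) : ℝ) + (-(((p : ℝ) * α - p) * θ)) := by
        push_cast
        linear_combination ((p : ℝ) ^ 2 * n) * hα2 + ((p : ℝ) - (p : ℝ) * α) * hβn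
      rw [he, Int.floor_intCast_add, Int.floor_neg]
      ring
    have hf : f ((p : ℝ) * α) n = ⌊(p : ℝ) * θ⌋ + ⌈((p : ℝ) * α - p) * θ⌉ := by
      unfold f
      rw [← hm, hfloor1, hfloor2]
      ring
    have hirr2 : Irrational (((p : ℝ) * α - p) * θ) := by
      have hpm : ((p : ℤ) * m) ≠ 0 :=
        mul_ne_zero (by exact_mod_cast Nat.one_le_iff_ne_zero.mp hp) (by omega)
      have h1 : Irrational (((p : ℤ) * m : ℤ) * α) := hirr.intCast_mul hpm
      have h2 : Irrational (((p ^ 2 * t * n + p * m : ℤ) : ℝ) - ((p : ℤ) * m : ℤ) * α) :=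
        h1.intCast_sub _
      have he : ((p : ℝ) * α - p) * θ =
          ((p ^ 2 * t * n + p * m : ℤ) : ℝ) - ((p : ℤ) * m : ℤ) * α := by
        push_cast
        linear_combination ((p : ℝ) ^ 2 * n) * hα2 + ((p : ℝ) - (p : ℝ) * α) * hβn
      rw [he]; exact h2
    have hceil_lt : ((p : ℝ) * α - p) * θ < (⌈((p : ℝ) * α - p) * θ⌉ : ℝ) :=
      lt_of_le_of_ne (Int.le_ceil _) (hirr2.ne_int _)
    have hfloor_nonneg : (0 : ℝ) ≤ (⌊(p : ℝ) * θ⌋ : ℝ) := by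
      have : (0:ℤ) ≤ ⌊(p : ℝ) * θ⌋ := Int.floor_nonneg.2 (by positivity)
      exact_mod_cast this
    have hfloor_le : (⌊(p : ℝ) * θ⌋ : ℝ) ≤ (p : ℝ) - 1 := by
      have h : ⌊(p : ℝ) * θ⌋ < (p : ℤ) := by
        rw [Int.floor_lt]
        push_cast
        nlinarith
      have h' : ⌊(p : ℝ) * θ⌋ ≤ (p : ℤ) - 1 := by omega
      calc (⌊(p : ℝ) * θ⌋ : ℝ) ≤ (((p : ℤ) - 1 : ℤ) : ℝ) := by exact_mod_cast h'
        _ = (p : ℝ) - 1 := by push_cast; ring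
    constructor
    · rw [hf]
      push_cast
      linarith
    · rw [hf]
      push_cast
      have h2 : (⌈((p : ℝ) * α - p) * θ⌉ : ℝ) < ((p : ℝ) * α - p) * θ + 1 :=
        Int.ceil_lt_add_one _
      linarith
  refine ⟨?_, fun n hn => key n hn⟩
  rintro v ⟨n, hn, hfv⟩
  obtain ⟨hlo, hhi⟩ := key n hn
  rw [hfv] at hlo hhi
  have hθ0 : 0 ≤ Int.fract ((p : ℝ) * α * (n : ℝ)) := Int.fract_nonneg _
  have hθ1 : Int.fract ((p : ℝ) * α * (n : ℝ)) < 1 := Int.fract_lt_one _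
  constructor
  · have h0 : (0 : ℝ) < (v : ℝ) :=
      lt_of_le_of_lt (mul_nonneg hβp.le hθ0) hlo
    exact_mod_cast h0
  · rw [Int.le_floor]
    nlinarith
end

section
/- Range(f_{√2}) = {1, 2}; that is, for every positive integer n, f_{√2}(n) = 2n − ⌊√2·⌊√2·n⌋⌋ ∈ {1, 2}, and both values 1 and 2 are attained. -/
lemma sqrt2_sq : (Real.sqrt 2) ^ 2 = 2 := Real.sq_sqrt (by norm_num)

lemma f_eq_s17 (n : ℕ) :
    f (Real.sqrt 2) n = 2 * (n : ℤ) - ⌊Real.sqrt 2 * ((⌊Real.sqrt 2 * (n : ℝ)⌋ : ℤ) : ℝ)⌋ := by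
  unfold f
  rw [sqrt2_sq]
  congr 1
  rw [show (2 : ℝ) * (n : ℝ) = ((2 * (n : ℤ) : ℤ) : ℝ) by push_cast; ring, Int.floor_intCast]

lemma f_mem (n : ℕ) (hn : 1 ≤ n) : f (Real.sqrt 2) n = 1 ∨ f (Real.sqrt 2) n = 2 := by
  have hs : (0:ℝ) < Real.sqrt 2 := Real.sqrt_pos.mpr (by norm_num)
  set m : ℤ := ⌊Real.sqrt 2 * (n : ℝ)⌋ with hm
  have hirr : Irrational (Real.sqrt 2 * (n : ℝ)) :=
    irrational_sqrt_two.mul_natCast (by omega)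
  have h1 : (m : ℝ) < Real.sqrt 2 * n := by
    rcases lt_or_eq_of_le (Int.floor_le (Real.sqrt 2 * (n : ℝ))) with h | h
    · exact h
    · exact absurd h.symm (hirr.ne_int m)
  have h2 : Real.sqrt 2 * n - 1 < (m : ℝ) := Int.sub_one_lt_floor _
  -- upper bound: √2 * m < 2n
  have hup : Real.sqrt 2 * (m : ℝ) < 2 * n := by
    have := mul_lt_mul_of_pos_left h1 hs
    calc Real.sqrt 2 * (m : ℝ) < Real.sqrt 2 * (Real.sqrt 2 * n) := this
      _ = 2 * n := by rw [← mul_assoc, ← sq, sqrt2_sq]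
  have hlo : 2 * (n : ℝ) - 2 < Real.sqrt 2 * (m : ℝ) := by
    have := mul_lt_mul_of_pos_left h2 hs
    have h3 : Real.sqrt 2 * (Real.sqrt 2 * n - 1) = 2 * n - Real.sqrt 2 := by
      rw [mul_sub, ← mul_assoc, ← sq, sqrt2_sq, mul_one]
    have hlt2 : Real.sqrt 2 < 2 := by
      nlinarith [Real.sq_sqrt (show (0:ℝ) ≤ 2 by norm_num), Real.sqrt_nonneg 2]
    nlinarith
  have hfu : ⌊Real.sqrt 2 * (m : ℝ)⌋ < 2 * (n : ℤ) := by
    rw [Int.floor_lt]; push_cast; exact hup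
  have hfl : 2 * (n : ℤ) - 2 ≤ ⌊Real.sqrt 2 * (m : ℝ)⌋ := by
    rw [Int.le_floor]; push_cast; exact le_of_lt hlo
  have hfeq := f_eq_s17 n
  rw [← hm] at hfeq
  omega

theorem stmt17 :
    (∀ n : ℕ, 1 ≤ n →
      f (Real.sqrt 2) n = 2 * (n : ℤ) - ⌊Real.sqrt 2 * ((⌊Real.sqrt 2 * (n : ℝ)⌋ : ℤ) : ℝ)⌋) ∧
    Range (Real.sqrt 2) = {1, 2} := by
  constructor
  · intro n _; exact f_eq_s17 n
  · ext v
    simp only [Range, Set.mem_setOf_eq, Set.mem_insert_iff, Set.mem_singleton_iff]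
    constructor
    · rintro ⟨n, hn, rfl⟩
      exact f_mem n hn
    · have hf1 : ⌊Real.sqrt 2 * (1 : ℝ)⌋ = 1 := by
        rw [mul_one]
        have h1 : (1:ℝ) ≤ Real.sqrt 2 := by
          nlinarith [Real.sq_sqrt (show (0:ℝ) ≤ 2 by norm_num), Real.sqrt_nonneg 2]
        have h2 : Real.sqrt 2 < 2 := by
          nlinarith [Real.sq_sqrt (show (0:ℝ) ≤ 2 by norm_num), Real.sqrt_nonneg 2]
        rw [Int.floor_eq_iff]
        constructor <;> push_cast <;> linarith
      have hf2 : ⌊Real.sqrt 2 * (2 : ℝ)⌋ = 2 := by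
        have h1 : (1:ℝ) ≤ Real.sqrt 2 := by
          nlinarith [Real.sq_sqrt (show (0:ℝ) ≤ 2 by norm_num), Real.sqrt_nonneg 2]
        have h2 : Real.sqrt 2 < 1.5 := by
          nlinarith [Real.sq_sqrt (show (0:ℝ) ≤ 2 by norm_num), Real.sqrt_nonneg 2]
        rw [Int.floor_eq_iff]
        constructor <;> push_cast <;> linarith
      rintro (rfl | rfl)
      · refine ⟨1, le_refl 1, ?_⟩
        rw [f_eq_s17 1]
        push_cast
        rw [hf1]
        push_cast
        rw [hf1]
        ring
      · refine ⟨2, by norm_num, ?_⟩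
        rw [f_eq_s17 2]
        push_cast
        rw [hf2]
        push_cast
        rw [hf2]
        ring
end

section
/- Range(f_{2+√2}) = {0, 1, 2, 3}; that is, for every positive integer n, f_{2+√2}(n) ∈ {0, 1, 2, 3}, and all four values 0, 1, 2, 3 are attained. -/
lemma key_s18 (n : ℕ) :
    f (2 + Real.sqrt 2) n = ⌊4 * Real.sqrt 2 * (n : ℝ)⌋ - 4 * ⌊Real.sqrt 2 * (n : ℝ)⌋ := by
  set s : ℝ := Real.sqrt 2 with hs
  have hs2 : s ^ 2 = 2 := Real.sq_sqrt (by norm_num)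
  have hs0 : 0 ≤ s := Real.sqrt_nonneg 2
  have hs1 : 1 ≤ s := by nlinarith
  have hsl2 : s ≤ 2 := by nlinarith
  set k : ℤ := ⌊s * (n : ℝ)⌋ with hk
  have hkle : (k : ℝ) ≤ s * n := Int.floor_le _
  have hklt : s * n < k + 1 := Int.lt_floor_add_one _
  -- ⌊(2+s) n⌋ = 2n + k
  have h1 : ⌊(2 + s) * (n : ℝ)⌋ = 2 * n + k := by
    have : (2 + s) * (n : ℝ) = s * n + ((2 * n : ℤ) : ℝ) := by push_cast; ring
    rw [this, Int.floor_add_intCast]; ring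
  -- ⌊s (2n+k)⌋ = 2n + 2k
  have h2 : ⌊s * ((2 * (n : ℤ) + k : ℤ) : ℝ)⌋ = 2 * n + 2 * k := by
    rw [Int.floor_eq_iff]
    constructor
    · push_cast; nlinarith
    · push_cast; nlinarith
  -- ⌊(2+s)(2n+k)⌋
  have h3 : ⌊(2 + s) * ((2 * (n : ℤ) + k : ℤ) : ℝ)⌋ = 4 * n + 2 * k + (2 * n + 2 * k) := by
    have he : (2 + s) * ((2 * (n : ℤ) + k : ℤ) : ℝ)
        = s * ((2 * (n : ℤ) + k : ℤ) : ℝ) + ((4 * n + 2 * k : ℤ) : ℝ) := by push_cast; ring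
    rw [he, Int.floor_add_intCast, h2]; ring
  -- ⌊(2+s)² n⌋ = 6n + ⌊4 s n⌋
  have h4 : ⌊(2 + s) ^ 2 * (n : ℝ)⌋ = 6 * n + ⌊4 * s * (n : ℝ)⌋ := by
    have he : (2 + s) ^ 2 * (n : ℝ) = 4 * s * n + ((6 * n : ℤ) : ℝ) := by
      push_cast; nlinarith
    rw [he, Int.floor_add_intCast]; ring
  unfold f
  rw [h1]
  have h1' : ((2 * n + k : ℤ) : ℝ) = ((2 * (n : ℤ) + k : ℤ) : ℝ) := by push_cast; ring
  rw [h1', h3, h4]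
  ring

lemma key_bounds (n : ℕ) : 0 ≤ f (2 + Real.sqrt 2) n ∧ f (2 + Real.sqrt 2) n ≤ 3 := by
  rw [key_s18]
  set s : ℝ := Real.sqrt 2 with hs
  set k : ℤ := ⌊s * (n : ℝ)⌋ with hk
  have hkle : (k : ℝ) ≤ s * n := Int.floor_le _
  have hklt : s * n < k + 1 := Int.lt_floor_add_one _
  have hlo : 4 * k ≤ ⌊4 * s * (n : ℝ)⌋ := by
    apply Int.le_floor.mpr; push_cast; nlinarith
  have hhi : ⌊4 * s * (n : ℝ)⌋ < 4 * k + 4 := by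
    apply Int.floor_lt.mpr; push_cast; nlinarith
  omega

lemma floor_sqrt2_eq (n : ℕ) (m : ℤ) (h1 : (m : ℝ) ^ 2 ≤ 2 * n ^ 2) (h2 : 2 * n ^ 2 < (m + 1) ^ 2)
    (hm : 0 ≤ m) : ⌊Real.sqrt 2 * (n : ℝ)⌋ = m := by
  have hs2 : Real.sqrt 2 ^ 2 = 2 := Real.sq_sqrt (by norm_num)
  have hs0 : 0 ≤ Real.sqrt 2 := Real.sqrt_nonneg 2
  have h2' : (2 * (n:ℝ) ^ 2) < ((m:ℝ) + 1) ^ 2 := by exact_mod_cast h2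
  have hsn : (0:ℝ) ≤ Real.sqrt 2 * n := by positivity
  have hm' : (0:ℝ) ≤ (m : ℝ) := by exact_mod_cast hm
  rw [Int.floor_eq_iff]
  constructor
  · nlinarith
  · nlinarith [(by linarith : (0:ℝ) ≤ (m:ℝ)+1), sq_nonneg (Real.sqrt 2 * n - ((m:ℝ)+1))]

theorem stmt18 : Range (2 + Real.sqrt 2) = {0, 1, 2, 3} := by
  ext v
  simp only [Range, Set.mem_setOf_eq, Set.mem_insert_iff, Set.mem_singleton_iff]
  constructor
  · rintro ⟨n, -, rfl⟩
    have := key_bounds n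
    omega
  · have e1 : f (2 + Real.sqrt 2) 3 = 0 := by
      rw [key_s18]
      have a : ⌊Real.sqrt 2 * ((3 : ℕ) : ℝ)⌋ = 4 := floor_sqrt2_eq 3 4 (by norm_num) (by norm_num) (by norm_num)
      have b : ⌊4 * Real.sqrt 2 * ((3 : ℕ) : ℝ)⌋ = 16 := by
        have := floor_sqrt2_eq 12 16 (by norm_num) (by norm_num) (by norm_num)
        rw [← this]; congr 1; push_cast; ring
      rw [a, b]; norm_num
    have e2 : f (2 + Real.sqrt 2) 1 = 1 := by
      rw [key_s18]
      have a : ⌊Real.sqrt 2 * ((1 : ℕ) : ℝ)⌋ = 1 := floor_sqrt2_eq 1 1 (by norm_num) (by norm_num) (by norm_num)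
      have b : ⌊4 * Real.sqrt 2 * ((1 : ℕ) : ℝ)⌋ = 5 := by
        have := floor_sqrt2_eq 4 5 (by norm_num) (by norm_num) (by norm_num)
        rw [← this]; congr 1; push_cast; ring
      rw [a, b]; norm_num
    have e3 : f (2 + Real.sqrt 2) 4 = 2 := by
      rw [key_s18]
      have a : ⌊Real.sqrt 2 * ((4 : ℕ) : ℝ)⌋ = 5 := floor_sqrt2_eq 4 5 (by norm_num) (by norm_num) (by norm_num)
      have b : ⌊4 * Real.sqrt 2 * ((4 : ℕ) : ℝ)⌋ = 22 := by
        have := floor_sqrt2_eq 16 22 (by norm_num) (by norm_num) (by norm_num)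
        rw [← this]; congr 1; push_cast; ring
      rw [a, b]; norm_num
    have e4 : f (2 + Real.sqrt 2) 2 = 3 := by
      rw [key_s18]
      have a : ⌊Real.sqrt 2 * ((2 : ℕ) : ℝ)⌋ = 2 := floor_sqrt2_eq 2 2 (by norm_num) (by norm_num) (by norm_num)
      have b : ⌊4 * Real.sqrt 2 * ((2 : ℕ) : ℝ)⌋ = 11 := by
        have := floor_sqrt2_eq 8 11 (by norm_num) (by norm_num) (by norm_num)
        rw [← this]; congr 1; push_cast; ring
      rw [a, b]; norm_num
    rintro (rfl | rfl | rfl | rfl)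
    · exact ⟨3, by norm_num, e1⟩
    · exact ⟨1, by norm_num, e2⟩
    · exact ⟨4, by norm_num, e3⟩
    · exact ⟨2, by norm_num, e4⟩
end

section
/- Let k, n ∈ ℕ be positive integers with k < n such that √(k/n) is irrational, and set ε_{k,n} = (1/n)·min{⌈√(kn)⌉ − √(kn), √(kn) − ⌊√(kn)⌋} > 0. Then for every real α with √(k/n) ≤ α < √(k/n) + ε_{k,n}, one has f_α(n) = 1. -/
set_option maxHeartbeats 1000000 in
theorem stmt19 (k n : ℕ) (hk : 1 ≤ k) (hkn : k < n)
    (hirr : Irrational (Real.sqrt ((k : ℝ) / (n : ℝ)))) (α : ℝ)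
    (h1 : Real.sqrt ((k : ℝ) / (n : ℝ)) ≤ α)
    (h2 : α < Real.sqrt ((k : ℝ) / (n : ℝ)) +
        (1 / (n : ℝ)) *
          min ((⌈Real.sqrt ((k : ℝ) * (n : ℝ))⌉ : ℝ) - Real.sqrt ((k : ℝ) * (n : ℝ)))
              (Real.sqrt ((k : ℝ) * (n : ℝ)) - (⌊Real.sqrt ((k : ℝ) * (n : ℝ))⌋ : ℝ))) :
    f α n = 1 := by
  have hn2 : 2 ≤ n := lt_of_le_of_lt hk hkn
  have hnR : (2:ℝ) ≤ n := by exact_mod_cast hn2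
  have hnpos : (0:ℝ) < n := by linarith
  have hkR : (1:ℝ) ≤ k := by exact_mod_cast hk
  have hknR : (k:ℝ) < n := by exact_mod_cast hkn
  set x := Real.sqrt ((k:ℝ) * n) with hxdef
  have hxnn : 0 ≤ x := Real.sqrt_nonneg _
  have hx2 : x ^ 2 = (k:ℝ) * n := Real.sq_sqrt (by positivity)
  have hsq : Real.sqrt ((k:ℝ)/n) = x / n := by
    have h : (k:ℝ)/n = (x/n)^2 := by
      rw [div_pow, hx2]; field_simp
    rw [h, Real.sqrt_sq (by positivity)]
  have hirrx : Irrational x := by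
    have h' : Irrational (x / n) := hsq ▸ hirr
    have h2' : Irrational (x / n * n) := h'.mul_natCast (by omega)
    have : x / n * n = x := by field_simp
    rwa [this] at h2'
  set m : ℤ := ⌊x⌋ with hmdef
  have hmle : (m:ℝ) ≤ x := Int.floor_le x
  have hmlt : (m:ℝ) < x := lt_of_le_of_ne hmle (fun h => hirrx.ne_int m h.symm)
  have hlt1 : x < m + 1 := Int.lt_floor_add_one x
  have hceil : ⌈x⌉ = m + 1 := by
    rw [Int.ceil_eq_iff]
    constructor
    · push_cast; linarith
    · push_cast; linarith
  have hx1 : 1 < x := by nlinarith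
  have hm1 : (1:ℝ) ≤ m := by
    have : (1:ℤ) ≤ m := Int.le_floor.mpr (by exact_mod_cast hx1.le)
    exact_mod_cast this
  have hkn1 : (k:ℝ) + 1 ≤ n := by exact_mod_cast hkn
  have hknn : (k:ℝ) * n ≤ ((n:ℝ) - 1) * n :=
    mul_le_mul_of_nonneg_right (by linarith) hnpos.le
  have hxn : x < n - 1/4 := by nlinarith [hx2, hknn, hxnn, hnpos]
  set t := min ((m:ℝ) + 1 - x) (x - m) with htdef
  have ht1 : t ≤ (m:ℝ) + 1 - x := min_le_left _ _
  have ht2 : t ≤ x - m := min_le_right _ _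
  have htpos : 0 < t := lt_min (by linarith) (by linarith)
  have hthalf : t < 1/2 := by
    by_contra h
    push_neg at h
    have hx' : x = (m:ℝ) + 1/2 := by linarith
    exact hirrx ⟨(m:ℚ) + 1/2, by push_cast; linarith⟩
  rw [hsq] at h1 h2
  rw [hceil] at h2
  push_cast at h2
  rw [← htdef] at h2
  have h2' : α < (x + t) / n := by
    rw [show (x + t)/n = x/n + 1/n * t from by ring]
    exact h2
  have hxn0 : 0 ≤ x / n := by positivity
  clear h2 hirr hirrx hsq hceil
  clear_value t m x
  have hα0 : 0 ≤ α := le_trans hxn0 h1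
  have hαn_lb : x ≤ α * n := by
    rw [div_le_iff₀ hnpos] at h1; exact h1
  have hαn_ub : α * n < x + t := by
    have := mul_lt_mul_of_pos_right h2' hnpos
    calc α * n < ((x+t)/n) * n := this
    _ = x + t := by field_simp
  -- Floor A
  have hfA : ⌊α * (n:ℝ)⌋ = m := by
    rw [Int.floor_eq_iff]
    constructor
    · linarith
    · push_cast; linarith
  -- Floor B
  have hfB : ⌊α * (m:ℝ)⌋ = (k:ℤ) - 1 := by
    rw [Int.floor_eq_iff]
    have hlow : ((k:ℝ) - 1) * n < x * m := by
      nlinarith [hx2, mul_nonneg hxnn (show (0:ℝ) ≤ (m:ℝ) + 1 - x by linarith)]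
    have hup : (x + t) * m < (k:ℝ) * n := by
      nlinarith [hx2, mul_pos (sub_pos.mpr hmlt) (sub_pos.mpr hmlt),
        mul_le_mul_of_nonneg_right ht2 (show (0:ℝ) ≤ m by linarith)]
    constructor
    · push_cast
      have h3 : (k:ℝ) - 1 < x / n * m := by
        rw [div_mul_eq_mul_div, lt_div_iff₀ hnpos]; exact hlow
      have h4 : x / n * m ≤ α * m := mul_le_mul_of_nonneg_right h1 (by linarith)
      linarith
    · push_cast
      have h5 : α * m < (x + t)/n * m :=
        mul_lt_mul_of_pos_right h2' (by linarith)
      have h6 : (x+t)/n * m < k := by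
        rw [div_mul_eq_mul_div, div_lt_iff₀ hnpos]; exact hup
      linarith
  -- Floor C
  have hfC : ⌊α ^ 2 * (n:ℝ)⌋ = (k:ℤ) := by
    rw [Int.floor_eq_iff]
    constructor
    · push_cast
      have h5 : (x/n) * (x/n) ≤ α * α := mul_le_mul h1 h1 (by positivity) hα0
      have h6 : (x/n) * (x/n) * n = (k:ℝ) := by
        field_simp
        linear_combination hx2
      have h7 := mul_le_mul_of_nonneg_right h5 hnpos.le
      rw [h6] at h7
      calc (k:ℝ) ≤ α * α * n := h7
      _ = α ^ 2 * n := by ring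
    · push_cast
      have hup : (x + t) ^ 2 < (k:ℝ) * n + n := by
        nlinarith [hx2, mul_pos (show (0:ℝ) < 1/2 - t by linarith)
          (show (0:ℝ) < 2*x + t by linarith)]
      have h7 : α * α < ((x+t)/n) * ((x+t)/n) :=
        mul_lt_mul' h2'.le h2' hα0 (by positivity)
      have h8 := mul_lt_mul_of_pos_right h7 hnpos
      have h9 : ((x+t)/n) * ((x+t)/n) * n = (x+t)^2 / n := by
        field_simp
      have h10 : (x+t)^2 / n < k + 1 := by
        rw [div_lt_iff₀ hnpos]; nlinarith
      calc α ^ 2 * n = α * α * n := by ring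
      _ < ((x+t)/n) * ((x+t)/n) * n := h8
      _ = (x+t)^2 / n := h9
      _ < k + 1 := h10
  unfold f
  rw [hfA, hfB, hfC]
  push_cast
  ring
end
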